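/- arXiv:math/0208047 — 6 statements merged into one kernel-verified Lean document; each statement's English description precedes it below -/
import Mathlib

section
/- Let T be a faithfully flat H-Galois object over k. Then for every x ∈ T the element S(x₍₁₎)⁽¹⁾ ⊗ (x₍₀₎·S(x₍₁₎)⁽²⁾) of T ⊗ T lies in T ⊗ k·1, i.e. it is in the image of the map T → T ⊗ T, t ↦ t ⊗ 1. -/
open TensorProduct LinearMap HopfAlgebra Coalgebra Bialgebra

set_option maxHeartbeats 2000000
set_option synthInstance.maxHeartbeats 400000

namespace GaloisAux

variable {k : Type*} [CommRing k]

/-- fuse two maps applied elementwise -/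
theorem map_map {M N P Q P' Q' : Type*} [AddCommMonoid M] [AddCommMonoid N] [AddCommMonoid P]
    [AddCommMonoid Q] [AddCommMonoid P'] [AddCommMonoid Q'] [Module k M] [Module k N] [Module k P]
    [Module k Q] [Module k P'] [Module k Q']
    (f₂ : P →ₗ[k] P') (g₂ : Q →ₗ[k] Q') (f₁ : M →ₗ[k] P) (g₁ : N →ₗ[k] Q) (x : M ⊗[k] N) :
    TensorProduct.map f₂ g₂ (TensorProduct.map f₁ g₁ x)
      = TensorProduct.map (f₂ ∘ₗ f₁) (g₂ ∘ₗ g₁) x := by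
  rw [TensorProduct.map_comp]; rfl

section Conv

variable {H : Type*} [Ring H] [HopfAlgebra k H]
variable {B : Type*} [Ring B] [Algebra k B]

/-- convolution product -/
noncomputable def conv (f g : H →ₗ[k] B) : H →ₗ[k] B :=
  mul' k B ∘ₗ TensorProduct.map f g ∘ₗ (Coalgebra.comul : H →ₗ[k] H ⊗[k] H)

theorem conv_apply (f g : H →ₗ[k] B) (y : H) :
    conv f g y = mul' k B (TensorProduct.map f g (Coalgebra.comul y)) := rfl

/-- the convolution unit -/
noncomputable def convOne : H →ₗ[k] B :=
  Algebra.linearMap k B ∘ₗ (Coalgebra.counit : H →ₗ[k] k)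

theorem mul'_one_left (w : B) : mul' k B ((1 : B) ⊗ₜ[k] w) = w := by
  have : (mul' k B ∘ₗ TensorProduct.mk k B B 1) w = w := by
    rw [show mul' k B ∘ₗ TensorProduct.mk k B B 1 = LinearMap.id from ?_]
    · rfl
    · ext w; simp [mul'_apply]
  simpa using this

theorem mul'_one_right (w : B) : mul' k B (w ⊗ₜ[k] (1 : B)) = w := by
  have : (mul' k B ∘ₗ (TensorProduct.mk k B B).flip 1) w = w := by
    rw [show mul' k B ∘ₗ (TensorProduct.mk k B B).flip 1 = LinearMap.id from ?_]
    · rfl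
    · ext w; simp [mul'_apply]
  simpa using this

theorem conv_one_left (f : H →ₗ[k] B) : conv convOne f = f := by
  apply LinearMap.ext; intro y
  rw [conv_apply]
  have h1 : TensorProduct.map (convOne (B := B)) f (Coalgebra.comul y)
      = TensorProduct.map (Algebra.linearMap k B) f
          (TensorProduct.map Coalgebra.counit LinearMap.id (Coalgebra.comul y)) := by
    rw [map_map]; rfl
  rw [h1]
  have h2 : TensorProduct.map (Coalgebra.counit : H →ₗ[k] k) LinearMap.id (Coalgebra.comul y)
      = (1 : k) ⊗ₜ[k] y := Coalgebra.rTensor_counit_comul y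
  rw [h2]
  simp [mul'_one_left, Algebra.TensorProduct.algebraMap_apply]

theorem conv_one_right (f : H →ₗ[k] B) : conv f convOne = f := by
  apply LinearMap.ext; intro y
  rw [conv_apply]
  have h1 : TensorProduct.map f (convOne (B := B)) (Coalgebra.comul y)
      = TensorProduct.map f (Algebra.linearMap k B)
          (TensorProduct.map LinearMap.id Coalgebra.counit (Coalgebra.comul y)) := by
    rw [map_map]; rfl
  rw [h1]
  have h2 : TensorProduct.map LinearMap.id (Coalgebra.counit : H →ₗ[k] k) (Coalgebra.comul y)
      = y ⊗ₜ[k] (1 : k) := Coalgebra.lTensor_counit_comul y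
  rw [h2]
  simp [mul'_one_right]

theorem mul'_assoc_elem (z : (B ⊗[k] B) ⊗[k] B) :
    mul' k B (TensorProduct.map (mul' k B) LinearMap.id z)
      = mul' k B (TensorProduct.map LinearMap.id (mul' k B)
          (TensorProduct.assoc k B B B z)) := by
  induction z using TensorProduct.induction_on with
  | zero => simp
  | add a b ha hb => simp [map_add, ha, hb]
  | tmul w c =>
    induction w using TensorProduct.induction_on with
    | zero => simp [zero_tmul]
    | add a b ha hb => simp only [add_tmul, map_add, ha, hb]
    | tmul a b => simp [mul'_apply, mul_assoc]

theorem conv_assoc (f g w : H →ₗ[k] B) : conv (conv f g) w = conv f (conv g w) := by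
  apply LinearMap.ext; intro y
  rw [conv_apply, conv_apply]
  have h1 : TensorProduct.map (conv f g) w (Coalgebra.comul y)
      = TensorProduct.map (mul' k B) LinearMap.id
          (TensorProduct.map (TensorProduct.map f g) w
            (TensorProduct.map Coalgebra.comul LinearMap.id (Coalgebra.comul y))) := by
    rw [map_map, map_map]; rfl
  rw [h1, mul'_assoc_elem]
  have h2 : TensorProduct.assoc k B B B
        (TensorProduct.map (TensorProduct.map f g) w
          (TensorProduct.map Coalgebra.comul LinearMap.id (Coalgebra.comul y)))
      = TensorProduct.map f (TensorProduct.map g w)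
          (TensorProduct.assoc k H H H
            (TensorProduct.map Coalgebra.comul LinearMap.id (Coalgebra.comul y))) := by
    rw [TensorProduct.map_map_assoc]
  rw [h2]
  have h3 : TensorProduct.assoc k H H H
        (TensorProduct.map Coalgebra.comul LinearMap.id (Coalgebra.comul y))
      = TensorProduct.map LinearMap.id Coalgebra.comul (Coalgebra.comul y) :=
    Coalgebra.coassoc_apply y
  rw [h3]
  have h4 : TensorProduct.map f (conv g w) (Coalgebra.comul y)
      = TensorProduct.map LinearMap.id (mul' k B)
          (TensorProduct.map f (TensorProduct.map g w)
            (TensorProduct.map LinearMap.id Coalgebra.comul (Coalgebra.comul y))) := by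
    rw [map_map, map_map]; rfl
  rw [h4]

end Conv

section Anti

variable {H : Type*} [Ring H] [HopfAlgebra k H]

theorem lTensor_eq_map {M N P : Type*} [AddCommMonoid M] [AddCommMonoid N] [AddCommMonoid P]
    [Module k M] [Module k N] [Module k P] (f : N →ₗ[k] P) :
    LinearMap.lTensor M f = TensorProduct.map LinearMap.id f := rfl

theorem rTensor_eq_map {M N P : Type*} [AddCommMonoid M] [AddCommMonoid N] [AddCommMonoid P]
    [Module k M] [Module k N] [Module k P] (f : N →ₗ[k] P) :
    LinearMap.rTensor M f = TensorProduct.map f LinearMap.id := rfl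

theorem lT_lT {M N P Q : Type*} [AddCommMonoid M] [AddCommMonoid N] [AddCommMonoid P]
    [AddCommMonoid Q] [Module k M] [Module k N] [Module k P] [Module k Q]
    (f : P →ₗ[k] Q) (g : N →ₗ[k] P) (x : M ⊗[k] N) :
    LinearMap.lTensor M f (LinearMap.lTensor M g x) = LinearMap.lTensor M (f ∘ₗ g) x := by
  rw [LinearMap.lTensor_comp]; rfl

/-- the anti-comultiplication candidate -/
noncomputable def antiW : H →ₗ[k] H ⊗[k] H :=
  TensorProduct.map (HopfAlgebra.antipode k) (HopfAlgebra.antipode k)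
    ∘ₗ (TensorProduct.comm k H H).toLinearMap ∘ₗ Coalgebra.comul

/-- `mul' ∘ (Δ ⊗ Δ) = Δ ∘ mul'` elementwise -/
theorem mul'_map_comul (z : H ⊗[k] H) :
    mul' k (H ⊗[k] H) (TensorProduct.map Coalgebra.comul Coalgebra.comul z)
      = Coalgebra.comul (mul' k H z) := by
  induction z using TensorProduct.induction_on with
  | zero => simp
  | add a b ha hb => simp only [map_add, ha, hb]
  | tmul a b => simp [mul'_apply, Bialgebra.comul_mul]

theorem inv1 :
    conv (Coalgebra.comul ∘ₗ ((HopfAlgebra.antipode k) : H →ₗ[k] H)) Coalgebra.comul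
      = (convOne : H →ₗ[k] H ⊗[k] H) := by
  apply LinearMap.ext; intro y
  rw [conv_apply]
  have h1 : TensorProduct.map (Coalgebra.comul ∘ₗ ((HopfAlgebra.antipode k) : H →ₗ[k] H))
        Coalgebra.comul (Coalgebra.comul y)
      = TensorProduct.map Coalgebra.comul Coalgebra.comul
          (TensorProduct.map (HopfAlgebra.antipode k) LinearMap.id (Coalgebra.comul y)) := by
    rw [map_map]; rfl
  rw [h1, mul'_map_comul, ← rTensor_eq_map, HopfAlgebra.mul_antipode_rTensor_comul_apply]
  simp [convOne, Bialgebra.comul_algebraMap]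

/-- STEP-K pure permutation lemma -/
theorem stepK (z : H ⊗[k] ((H ⊗[k] H) ⊗[k] H)) :
    mul' k (H ⊗[k] H)
      (TensorProduct.map LinearMap.id
        (TensorProduct.map (HopfAlgebra.antipode k) (HopfAlgebra.antipode k)
          ∘ₗ (TensorProduct.comm k H H).toLinearMap)
        ((TensorProduct.assoc k H H (H ⊗[k] H)).symm
          (LinearMap.lTensor H (TensorProduct.assoc k H H H).toLinearMap z)))
    = TensorProduct.map (mul' k H ∘ₗ LinearMap.lTensor H (HopfAlgebra.antipode k))
        (mul' k H ∘ₗ LinearMap.lTensor H (HopfAlgebra.antipode k))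
        ((TensorProduct.assoc k H H (H ⊗[k] H)).symm
          (LinearMap.lTensor H (TensorProduct.comm k (H ⊗[k] H) H).toLinearMap z)) := by
  induction z using TensorProduct.induction_on with
  | zero => simp
  | add a b ha hb => simp only [map_add, ha, hb]
  | tmul t v =>
    induction v using TensorProduct.induction_on with
    | zero => simp [tmul_zero]
    | add a b ha hb => simp only [tmul_add, map_add, ha, hb]
    | tmul w c =>
      induction w using TensorProduct.induction_on with
      | zero => simp [zero_tmul, tmul_zero]
      | add a b ha hb => simp only [add_tmul, tmul_add, map_add, ha, hb]
      | tmul a b =>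
        simp [mul'_apply, Algebra.TensorProduct.tmul_mul_tmul]

theorem lTensor_counit_comm_comul (a : H) :
    LinearMap.lTensor H (Coalgebra.counit : H →ₗ[k] k)
        ((TensorProduct.comm k H H) (Coalgebra.comul a))
      = a ⊗ₜ[k] (1 : k) := by
  rw [lTensor_eq_map, TensorProduct.map_comm, ← rTensor_eq_map,
    Coalgebra.rTensor_counit_comul]
  simp

/-- glue lemma -/
theorem glue (F : H ⊗[k] H →ₗ[k] H) (w : H ⊗[k] H) :
    TensorProduct.map LinearMap.id (Algebra.linearMap k H)
      (TensorProduct.map F LinearMap.id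
        ((TensorProduct.assoc k H H k).symm
          (LinearMap.lTensor H ((TensorProduct.mk k H k).flip 1) w)))
      = (F w) ⊗ₜ[k] (1 : H) := by
  induction w using TensorProduct.induction_on with
  | zero => simp
  | add a b ha hb => simp only [map_add, ha, hb, add_tmul]
  | tmul a b => simp [Algebra.linearMap_apply]

theorem inv2 : conv Coalgebra.comul (antiW : H →ₗ[k] H ⊗[k] H) = convOne := by
  apply LinearMap.ext; intro y
  rw [conv_apply]
  have d1 : TensorProduct.map Coalgebra.comul (antiW : H →ₗ[k] H ⊗[k] H) (Coalgebra.comul y)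
      = TensorProduct.map LinearMap.id
          (TensorProduct.map (HopfAlgebra.antipode k) (HopfAlgebra.antipode k)
            ∘ₗ (TensorProduct.comm k H H).toLinearMap)
          (LinearMap.lTensor (H ⊗[k] H) Coalgebra.comul
            (LinearMap.rTensor H Coalgebra.comul (Coalgebra.comul y))) := by
    rw [lTensor_eq_map, rTensor_eq_map, map_map, map_map]; rfl
  rw [d1]
  have d3 : LinearMap.rTensor H (Coalgebra.comul : H →ₗ[k] H ⊗[k] H) (Coalgebra.comul y)
      = (TensorProduct.assoc k H H H).symm
          (LinearMap.lTensor H Coalgebra.comul (Coalgebra.comul y)) :=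
    (Coalgebra.coassoc_symm_apply y).symm
  rw [d3]
  have d5 : LinearMap.lTensor (H ⊗[k] H) (Coalgebra.comul : H →ₗ[k] H ⊗[k] H)
        ((TensorProduct.assoc k H H H).symm
          (LinearMap.lTensor H Coalgebra.comul (Coalgebra.comul y)))
      = (TensorProduct.assoc k H H (H ⊗[k] H)).symm
          (LinearMap.lTensor H (LinearMap.lTensor H Coalgebra.comul)
            (LinearMap.lTensor H Coalgebra.comul (Coalgebra.comul y))) := by
    have := TensorProduct.map_map_assoc_symm (LinearMap.id : H →ₗ[k] H)
      (LinearMap.id : H →ₗ[k] H) (Coalgebra.comul : H →ₗ[k] H ⊗[k] H)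
      (LinearMap.lTensor H Coalgebra.comul (Coalgebra.comul y))
    rw [TensorProduct.map_id] at this
    exact this
  rw [d5]
  have d6 : LinearMap.lTensor H (LinearMap.lTensor H (Coalgebra.comul : H →ₗ[k] H ⊗[k] H))
        (LinearMap.lTensor H Coalgebra.comul (Coalgebra.comul y))
      = LinearMap.lTensor H (TensorProduct.assoc k H H H).toLinearMap
          (LinearMap.lTensor H (LinearMap.rTensor H Coalgebra.comul ∘ₗ Coalgebra.comul)
            (Coalgebra.comul y)) := by
    rw [lT_lT, lT_lT]
    exact LinearMap.congr_fun (congrArg (LinearMap.lTensor H) Coalgebra.coassoc.symm)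
      (Coalgebra.comul y)
  rw [d6, stepK]
  have e1 : LinearMap.lTensor H (TensorProduct.comm k (H ⊗[k] H) H).toLinearMap
        (LinearMap.lTensor H (LinearMap.rTensor H Coalgebra.comul ∘ₗ Coalgebra.comul)
          (Coalgebra.comul y))
      = LinearMap.lTensor H (LinearMap.lTensor H Coalgebra.comul)
          (LinearMap.lTensor H
            ((TensorProduct.comm k H H).toLinearMap ∘ₗ Coalgebra.comul)
            (Coalgebra.comul y)) := by
    rw [lT_lT, lT_lT]
    apply LinearMap.congr_fun (congrArg (LinearMap.lTensor H) ?_) (Coalgebra.comul y)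
    apply LinearMap.ext; intro a
    simp only [LinearMap.comp_apply, LinearEquiv.coe_coe]
    rw [lTensor_eq_map, rTensor_eq_map, TensorProduct.map_comm]
  rw [e1]
  have e3 : (TensorProduct.assoc k H H (H ⊗[k] H)).symm
        (LinearMap.lTensor H (LinearMap.lTensor H (Coalgebra.comul : H →ₗ[k] H ⊗[k] H))
          (LinearMap.lTensor H ((TensorProduct.comm k H H).toLinearMap ∘ₗ Coalgebra.comul)
            (Coalgebra.comul y)))
      = LinearMap.lTensor (H ⊗[k] H) Coalgebra.comul
          ((TensorProduct.assoc k H H H).symm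
            (LinearMap.lTensor H
              ((TensorProduct.comm k H H).toLinearMap ∘ₗ Coalgebra.comul)
              (Coalgebra.comul y))) := by
    have := TensorProduct.map_map_assoc_symm (LinearMap.id : H →ₗ[k] H)
      (LinearMap.id : H →ₗ[k] H) (Coalgebra.comul : H →ₗ[k] H ⊗[k] H)
      (LinearMap.lTensor H ((TensorProduct.comm k H H).toLinearMap ∘ₗ Coalgebra.comul)
        (Coalgebra.comul y))
    rw [TensorProduct.map_id] at this
    exact this.symm
  rw [e3]
  set F := mul' k H ∘ₗ LinearMap.lTensor H ((HopfAlgebra.antipode k) : H →ₗ[k] H) with hF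
  have e4 : TensorProduct.map F F
        (LinearMap.lTensor (H ⊗[k] H) Coalgebra.comul
          ((TensorProduct.assoc k H H H).symm
            (LinearMap.lTensor H
              ((TensorProduct.comm k H H).toLinearMap ∘ₗ Coalgebra.comul)
              (Coalgebra.comul y))))
      = TensorProduct.map F (Algebra.linearMap k H ∘ₗ Coalgebra.counit)
          ((TensorProduct.assoc k H H H).symm
            (LinearMap.lTensor H
              ((TensorProduct.comm k H H).toLinearMap ∘ₗ Coalgebra.comul)
              (Coalgebra.comul y))) := by
    rw [lTensor_eq_map, map_map]
    have hFd : F ∘ₗ (Coalgebra.comul : H →ₗ[k] H ⊗[k] H)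
        = Algebra.linearMap k H ∘ₗ Coalgebra.counit :=
      HopfAlgebra.mul_antipode_lTensor_comul
    rw [show F ∘ₗ LinearMap.id = F from LinearMap.comp_id F, hFd]
  rw [e4]
  have e5 : TensorProduct.map F (Algebra.linearMap k H ∘ₗ (Coalgebra.counit : H →ₗ[k] k))
        ((TensorProduct.assoc k H H H).symm
          (LinearMap.lTensor H
            ((TensorProduct.comm k H H).toLinearMap ∘ₗ Coalgebra.comul)
            (Coalgebra.comul y)))
      = TensorProduct.map LinearMap.id (Algebra.linearMap k H)
          (TensorProduct.map F LinearMap.id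
            ((TensorProduct.assoc k H H k).symm
              (LinearMap.lTensor H
                (LinearMap.lTensor H Coalgebra.counit
                  ∘ₗ (TensorProduct.comm k H H).toLinearMap ∘ₗ Coalgebra.comul)
                (Coalgebra.comul y)))) := by
    rw [map_map]
    have nat : TensorProduct.map (TensorProduct.map LinearMap.id LinearMap.id)
          (Coalgebra.counit : H →ₗ[k] k)
          ((TensorProduct.assoc k H H H).symm
            (LinearMap.lTensor H
              ((TensorProduct.comm k H H).toLinearMap ∘ₗ Coalgebra.comul)
              (Coalgebra.comul y)))
        = (TensorProduct.assoc k H H k).symm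
            (TensorProduct.map LinearMap.id (TensorProduct.map LinearMap.id Coalgebra.counit)
              (LinearMap.lTensor H
                ((TensorProduct.comm k H H).toLinearMap ∘ₗ Coalgebra.comul)
                (Coalgebra.comul y))) :=
      TensorProduct.map_map_assoc_symm _ _ _ _
    rw [TensorProduct.map_id] at nat
    calc TensorProduct.map (F ∘ₗ LinearMap.id)
          ((Algebra.linearMap k H ∘ₗ LinearMap.id) ∘ₗ Coalgebra.counit)
          ((TensorProduct.assoc k H H H).symm
            (LinearMap.lTensor H
              ((TensorProduct.comm k H H).toLinearMap ∘ₗ Coalgebra.comul)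
              (Coalgebra.comul y)))
        = TensorProduct.map LinearMap.id (Algebra.linearMap k H)
            (TensorProduct.map F LinearMap.id
              (TensorProduct.map LinearMap.id Coalgebra.counit
                ((TensorProduct.assoc k H H H).symm
                  (LinearMap.lTensor H
                    ((TensorProduct.comm k H H).toLinearMap ∘ₗ Coalgebra.comul)
                    (Coalgebra.comul y))))) := by
          rw [map_map, map_map]; rfl
      _ = _ := by
          rw [nat]
          have fuse : TensorProduct.map LinearMap.id
                (TensorProduct.map LinearMap.id (Coalgebra.counit : H →ₗ[k] k))
                (LinearMap.lTensor H
                  ((TensorProduct.comm k H H).toLinearMap ∘ₗ Coalgebra.comul)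
                  (Coalgebra.comul y))
              = LinearMap.lTensor H
                  (LinearMap.lTensor H Coalgebra.counit
                    ∘ₗ (TensorProduct.comm k H H).toLinearMap ∘ₗ Coalgebra.comul)
                  (Coalgebra.comul y) := lT_lT _ _ _
          rw [fuse, map_map]
  rw [e5]
  have g2 : (LinearMap.lTensor H (Coalgebra.counit : H →ₗ[k] k)
        ∘ₗ (TensorProduct.comm k H H).toLinearMap ∘ₗ Coalgebra.comul)
      = (TensorProduct.mk k H k).flip 1 := by
    apply LinearMap.ext; intro a
    simpa using lTensor_counit_comm_comul (k := k) a
  rw [g2, glue]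
  have g4 : F (Coalgebra.comul y) = algebraMap k H (Coalgebra.counit y) := by
    rw [hF]
    exact HopfAlgebra.mul_antipode_lTensor_comul_apply y
  rw [g4]
  simp [convOne, Algebra.TensorProduct.algebraMap_apply]

/-- Anti-comultiplicativity of the antipode. -/
theorem comul_antipode :
    (Coalgebra.comul ∘ₗ ((HopfAlgebra.antipode k) : H →ₗ[k] H)) = (antiW : H →ₗ[k] H ⊗[k] H) := by
  have h1 := conv_one_right (Coalgebra.comul ∘ₗ ((HopfAlgebra.antipode k) : H →ₗ[k] H))
  rw [← inv2, ← conv_assoc, inv1, conv_one_left] at h1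
  exact h1.symm

end Anti

section Galois

variable {H : Type*} [Ring H] [HopfAlgebra k H]
variable {T : Type*} [Ring T] [Algebra k T]

theorem rT_rT {M N P Q : Type*} [AddCommMonoid M] [AddCommMonoid N] [AddCommMonoid P]
    [AddCommMonoid Q] [Module k M] [Module k N] [Module k P] [Module k Q]
    (f : P →ₗ[k] Q) (g : N →ₗ[k] P) (x : N ⊗[k] M) :
    LinearMap.rTensor M f (LinearMap.rTensor M g x) = LinearMap.rTensor M (f ∘ₗ g) x := by
  rw [LinearMap.rTensor_comp]; rfl

theorem tmul_assoc_symm {M N P : Type*} [AddCommMonoid M] [AddCommMonoid N] [AddCommMonoid P]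
    [Module k M] [Module k N] [Module k P] (a : M) (w : N ⊗[k] P) :
    (TensorProduct.assoc k M N P).symm (a ⊗ₜ[k] w)
      = LinearMap.rTensor P (TensorProduct.mk k M N a) w := by
  induction w using TensorProduct.induction_on with
  | zero => simp [tmul_zero]
  | add u v hu hv => simp only [tmul_add, map_add, hu, hv]
  | tmul n p => simp

theorem mulLeft_tmul (a : T) (w : T ⊗[k] H) :
    (a ⊗ₜ[k] (1 : H)) * w = LinearMap.rTensor H (LinearMap.mulLeft k a) w := by
  induction w using TensorProduct.induction_on with
  | zero => simp
  | add u v hu hv => simp only [mul_add, map_add, hu, hv]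
  | tmul t h => simp [Algebra.TensorProduct.tmul_mul_tmul]

variable (ρ : T →ₐ[k] T ⊗[k] H) (β : T ⊗[k] T →ₗ[k] T ⊗[k] H) (γ : H →ₗ[k] T ⊗[k] T)

theorem beta_mk (hβ : ∀ x y : T, β (x ⊗ₜ[k] y) = (x ⊗ₜ[k] (1 : H)) * ρ y) (a y : T) :
    β (a ⊗ₜ[k] y) = LinearMap.rTensor H (LinearMap.mulLeft k a) (ρ y) := by
  rw [hβ, mulLeft_tmul]

theorem lemA
    (hcoassoc : ∀ x : T,
      (TensorProduct.map ρ.toLinearMap LinearMap.id) (ρ x)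
        = (TensorProduct.assoc k T H H).symm
            ((TensorProduct.map LinearMap.id Coalgebra.comul) (ρ x)))
    (hβ : ∀ x y : T, β (x ⊗ₜ[k] y) = (x ⊗ₜ[k] (1 : H)) * ρ y)
    (w : T ⊗[k] T) :
    LinearMap.rTensor H β ((TensorProduct.assoc k T T H).symm
        (LinearMap.lTensor T ρ.toLinearMap w))
      = (TensorProduct.assoc k T H H).symm
          (LinearMap.lTensor T Coalgebra.comul (β w)) := by
  induction w using TensorProduct.induction_on with
  | zero => simp
  | add u v hu hv => simp only [map_add, hu, hv]
  | tmul a b =>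
    have l1 : LinearMap.lTensor T ρ.toLinearMap (a ⊗ₜ[k] b) = a ⊗ₜ[k] (ρ b) := rfl
    rw [l1, tmul_assoc_symm, rT_rT]
    have l2 : (β ∘ₗ TensorProduct.mk k T T a)
        = LinearMap.rTensor H (LinearMap.mulLeft k a) ∘ₗ ρ.toLinearMap := by
      apply LinearMap.ext; intro y
      exact beta_mk ρ β hβ a y
    rw [l2, ← rT_rT]
    have l3 : LinearMap.rTensor H ρ.toLinearMap (ρ b)
        = (TensorProduct.assoc k T H H).symm
            (LinearMap.lTensor T Coalgebra.comul (ρ b)) := hcoassoc b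
    rw [l3]
    have l4 := TensorProduct.map_map_assoc_symm (LinearMap.mulLeft k a)
      (LinearMap.id : H →ₗ[k] H) (LinearMap.id : H →ₗ[k] H)
      (LinearMap.lTensor T Coalgebra.comul (ρ b))
    rw [TensorProduct.map_id] at l4
    have l5 : LinearMap.rTensor H (LinearMap.rTensor H (LinearMap.mulLeft k a))
        ((TensorProduct.assoc k T H H).symm (LinearMap.lTensor T Coalgebra.comul (ρ b)))
        = (TensorProduct.assoc k T H H).symm
          (LinearMap.rTensor (H ⊗[k] H) (LinearMap.mulLeft k a)
            (LinearMap.lTensor T Coalgebra.comul (ρ b))) := l4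
    rw [l5]
    have l6 : LinearMap.rTensor (H ⊗[k] H) (LinearMap.mulLeft k a)
          (LinearMap.lTensor T Coalgebra.comul (ρ b))
        = LinearMap.lTensor T Coalgebra.comul
            (LinearMap.rTensor H (LinearMap.mulLeft k a) (ρ b)) := by
      rw [← LinearMap.comp_apply, LinearMap.rTensor_comp_lTensor,
        ← LinearMap.lTensor_comp_rTensor, LinearMap.comp_apply]
    rw [l6, ← beta_mk ρ β hβ, hβ]

theorem rT_beta_inj (hβbij : Function.Bijective β) :
    Function.Injective (LinearMap.rTensor H β) := by
  set e := LinearEquiv.ofBijective β hβbij with he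
  intro u v huv
  have h2 := congrArg (LinearMap.rTensor H (e.symm : T ⊗[k] H →ₗ[k] T ⊗[k] T)) huv
  rw [rT_rT, rT_rT] at h2
  have h3 : ((e.symm : T ⊗[k] H →ₗ[k] T ⊗[k] T) ∘ₗ β) = LinearMap.id := by
    apply LinearMap.ext; intro w
    exact e.symm_apply_apply w
  rw [h3] at h2
  simpa using h2

theorem colinear
    (hcoassoc : ∀ x : T,
      (TensorProduct.map ρ.toLinearMap LinearMap.id) (ρ x)
        = (TensorProduct.assoc k T H H).symm
            ((TensorProduct.map LinearMap.id Coalgebra.comul) (ρ x)))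
    (hβ : ∀ x y : T, β (x ⊗ₜ[k] y) = (x ⊗ₜ[k] (1 : H)) * ρ y)
    (hβbij : Function.Bijective β)
    (hγ : ∀ h : H, β (γ h) = (1 : T) ⊗ₜ[k] h) (h : H) :
    LinearMap.lTensor T ρ.toLinearMap (γ h)
      = TensorProduct.assoc k T T H
          (LinearMap.rTensor H γ (Coalgebra.comul h)) := by
  have hinj : Function.Injective (fun w : T ⊗[k] (T ⊗[k] H) =>
      LinearMap.rTensor H β ((TensorProduct.assoc k T T H).symm w)) := by
    intro u v huv
    exact (TensorProduct.assoc k T T H).symm.injective (rT_beta_inj β hβbij huv)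
  apply hinj
  simp only
  rw [lemA ρ β hcoassoc hβ (γ h), hγ]
  have r1 : LinearMap.lTensor T (Coalgebra.comul : H →ₗ[k] H ⊗[k] H) ((1 : T) ⊗ₜ[k] h)
      = (1 : T) ⊗ₜ[k] (Coalgebra.comul h) := rfl
  rw [r1, tmul_assoc_symm]
  rw [(TensorProduct.assoc k T T H).symm_apply_apply, rT_rT]
  refine congrArg (fun f : H →ₗ[k] T ⊗[k] H =>
    LinearMap.rTensor H f (Coalgebra.comul h)) ?_
  apply LinearMap.ext; intro h'
  simpa using (hγ h').symm

theorem colinearS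
    (hcoassoc : ∀ x : T,
      (TensorProduct.map ρ.toLinearMap LinearMap.id) (ρ x)
        = (TensorProduct.assoc k T H H).symm
            ((TensorProduct.map LinearMap.id Coalgebra.comul) (ρ x)))
    (hβ : ∀ x y : T, β (x ⊗ₜ[k] y) = (x ⊗ₜ[k] (1 : H)) * ρ y)
    (hβbij : Function.Bijective β)
    (hγ : ∀ h : H, β (γ h) = (1 : T) ⊗ₜ[k] h) (h : H) :
    LinearMap.lTensor T ρ.toLinearMap (γ (HopfAlgebra.antipode (R := k) h))
      = TensorProduct.assoc k T T H
          (TensorProduct.map (γ ∘ₗ (HopfAlgebra.antipode k)) (HopfAlgebra.antipode k)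
            ((TensorProduct.comm k H H) (Coalgebra.comul h))) := by
  rw [colinear ρ β γ hcoassoc hβ hβbij hγ (HopfAlgebra.antipode (R := k) h)]
  have hΔS : (Coalgebra.comul (HopfAlgebra.antipode (R := k) h) : H ⊗[k] H)
      = TensorProduct.map (HopfAlgebra.antipode k) (HopfAlgebra.antipode k)
          ((TensorProduct.comm k H H) (Coalgebra.comul h)) :=
    LinearMap.congr_fun (comul_antipode (k := k) (H := H)) h
  rw [hΔS]
  refine congrArg _ ?_
  rw [rTensor_eq_map, map_map]
  rfl

/-- generic naturality of the braiding `M⊗(N⊗P) → N⊗(M⊗P)` -/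
theorem perm_nat {M N P M' N' P' : Type*} [AddCommMonoid M] [AddCommMonoid N] [AddCommMonoid P]
    [AddCommMonoid M'] [AddCommMonoid N'] [AddCommMonoid P'] [Module k M] [Module k N]
    [Module k P] [Module k M'] [Module k N'] [Module k P']
    (f : M →ₗ[k] M') (g : N →ₗ[k] N') (h : P →ₗ[k] P') (z : M ⊗[k] (N ⊗[k] P)) :
    TensorProduct.assoc k N' M' P'
        (LinearMap.rTensor P' (TensorProduct.comm k M' N').toLinearMap
          ((TensorProduct.assoc k M' N' P').symm
            (TensorProduct.map f (TensorProduct.map g h) z)))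
      = TensorProduct.map g (TensorProduct.map f h)
          (TensorProduct.assoc k N M P
            (LinearMap.rTensor P (TensorProduct.comm k M N).toLinearMap
              ((TensorProduct.assoc k M N P).symm z))) := by
  induction z using TensorProduct.induction_on with
  | zero => simp
  | add u v hu hv => simp only [map_add, hu, hv]
  | tmul m w =>
    induction w using TensorProduct.induction_on with
    | zero => simp [tmul_zero]
    | add u v hu hv => simp only [tmul_add, map_add, hu, hv]
    | tmul n p =>
      simp [TensorProduct.assoc_symm_tmul, TensorProduct.assoc_tmul]

noncomputable def iota : T →ₗ[k] T ⊗[k] H := (TensorProduct.mk k T H).flip 1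

@[simp] theorem iota_apply (t : T) : (iota : T →ₗ[k] T ⊗[k] H) t = t ⊗ₜ[k] (1 : H) := rfl

theorem s1 (hβ : ∀ x y : T, β (x ⊗ₜ[k] y) = (x ⊗ₜ[k] (1 : H)) * ρ y)
    (v : T ⊗[k] (T ⊗[k] T)) :
    β (LinearMap.lTensor T (mul' k T) v)
      = mul' k (T ⊗[k] H)
          (TensorProduct.map iota
            (mul' k (T ⊗[k] H) ∘ₗ TensorProduct.map ρ.toLinearMap ρ.toLinearMap) v) := by
  induction v using TensorProduct.induction_on with
  | zero => simp
  | add u v hu hv => simp only [map_add, hu, hv]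
  | tmul u w =>
    induction w using TensorProduct.induction_on with
    | zero => simp [tmul_zero]
    | add p q hp hq => simp only [tmul_add, map_add, hp, hq]
    | tmul t v' =>
      simp [hβ, mul'_apply, _root_.map_mul, mul_assoc]

noncomputable def Xi0 (γ : H →ₗ[k] T ⊗[k] T) : H ⊗[k] H →ₗ[k] T ⊗[k] (T ⊗[k] H) :=
  (TensorProduct.assoc k T T H).toLinearMap
    ∘ₗ TensorProduct.map (γ ∘ₗ (HopfAlgebra.antipode k)) (HopfAlgebra.antipode k)
    ∘ₗ (TensorProduct.comm k H H).toLinearMap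

noncomputable def D1head (γ : H →ₗ[k] T ⊗[k] T) :
    H ⊗[k] (H ⊗[k] H) →ₗ[k] T ⊗[k] (T ⊗[k] H) :=
  LinearMap.lTensor T (LinearMap.lTensor T (mul' k H))
    ∘ₗ (TensorProduct.assoc k T T (H ⊗[k] H)).toLinearMap
    ∘ₗ (TensorProduct.comm k (H ⊗[k] H) (T ⊗[k] T)).toLinearMap
    ∘ₗ (TensorProduct.assoc k H H (T ⊗[k] T)).symm.toLinearMap
    ∘ₗ LinearMap.lTensor H (LinearMap.rTensor (T ⊗[k] T) (HopfAlgebra.antipode k))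
    ∘ₗ LinearMap.lTensor H (LinearMap.lTensor H (γ ∘ₗ (HopfAlgebra.antipode k)))

noncomputable def Phi' : T ⊗[k] (T ⊗[k] (T ⊗[k] H)) →ₗ[k] T ⊗[k] H :=
  mul' k (T ⊗[k] H)
    ∘ₗ TensorProduct.map iota
        (mul' k (T ⊗[k] H) ∘ₗ TensorProduct.map iota LinearMap.id)
    ∘ₗ (TensorProduct.assoc k T T (T ⊗[k] H)).toLinearMap
    ∘ₗ LinearMap.rTensor (T ⊗[k] H) (TensorProduct.comm k T T).toLinearMap
    ∘ₗ (TensorProduct.assoc k T T (T ⊗[k] H)).symm.toLinearMap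

set_option maxHeartbeats 2000000 in
theorem pureMainPure (t : T) (a b c : H) :
    mul' k (T ⊗[k] H)
      (TensorProduct.map iota (mul' k (T ⊗[k] H))
        (TensorProduct.assoc k T (T ⊗[k] H) (T ⊗[k] H)
          (LinearMap.rTensor (T ⊗[k] H)
              (TensorProduct.comm k (T ⊗[k] H) T).toLinearMap
            ((TensorProduct.assoc k (T ⊗[k] H) T (T ⊗[k] H)).symm
              (LinearMap.lTensor (T ⊗[k] H) (Xi0 γ)
                ((TensorProduct.assoc k T H (H ⊗[k] H)).symm (t ⊗ₜ[k] (a ⊗ₜ[k] (b ⊗ₜ[k] c)))))))))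
    = Phi' (LinearMap.lTensor T (D1head γ) (t ⊗ₜ[k] (a ⊗ₜ[k] (b ⊗ₜ[k] c)))) := by
  simp only [Xi0, D1head, Phi', LinearMap.comp_apply, LinearEquiv.coe_coe,
    TensorProduct.assoc_symm_tmul, TensorProduct.assoc_tmul, TensorProduct.comm_tmul,
    LinearMap.lTensor_tmul, LinearMap.rTensor_tmul, TensorProduct.map_tmul]
  generalize γ (HopfAlgebra.antipode (R := k) c) = g
  induction g using TensorProduct.induction_on with
  | zero => simp only [TensorProduct.zero_tmul, TensorProduct.tmul_zero, map_zero]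
  | add u v hu hv =>
      simp only [TensorProduct.add_tmul, TensorProduct.tmul_add, map_add, hu, hv]
  | tmul u v =>
      simp only [TensorProduct.assoc_tmul, TensorProduct.assoc_symm_tmul,
        TensorProduct.comm_tmul, LinearMap.rTensor_tmul, LinearMap.lTensor_tmul,
        TensorProduct.map_tmul, LinearMap.mul'_apply, iota_apply, LinearMap.comp_apply,
        LinearMap.id_coe, id_eq, LinearEquiv.coe_coe,
        Algebra.TensorProduct.tmul_mul_tmul, one_mul, mul_one, mul_assoc]


theorem pureMain (Y : T ⊗[k] (H ⊗[k] (H ⊗[k] H))) :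
    mul' k (T ⊗[k] H)
      (TensorProduct.map iota (mul' k (T ⊗[k] H))
        (TensorProduct.assoc k T (T ⊗[k] H) (T ⊗[k] H)
          (LinearMap.rTensor (T ⊗[k] H)
              (TensorProduct.comm k (T ⊗[k] H) T).toLinearMap
            ((TensorProduct.assoc k (T ⊗[k] H) T (T ⊗[k] H)).symm
              (LinearMap.lTensor (T ⊗[k] H) (Xi0 γ)
                ((TensorProduct.assoc k T H (H ⊗[k] H)).symm Y))))))
    = Phi' (LinearMap.lTensor T (D1head γ) Y) := by
  induction Y using TensorProduct.induction_on with
  | zero => simp only [map_zero]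
  | add u v hu hv => simp only [map_add, hu, hv]
  | tmul t w =>
    induction w using TensorProduct.induction_on with
    | zero => simp only [TensorProduct.tmul_zero, map_zero]
    | add u v hu hv => simp only [TensorProduct.tmul_add, map_add, hu, hv]
    | tmul a w2 =>
      induction w2 using TensorProduct.induction_on with
      | zero => simp only [TensorProduct.tmul_zero, map_zero]
      | add u v hu hv => simp only [TensorProduct.tmul_add, map_add, hu, hv]
      | tmul b c => exact pureMainPure γ t a b c

theorem glu2 (g : T ⊗[k] T) :
    TensorProduct.assoc k T T H (g ⊗ₜ[k] (1 : H)) = LinearMap.lTensor T iota g := by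
  induction g using TensorProduct.induction_on with
  | zero => simp [zero_tmul]
  | add u v hu hv => simp only [add_tmul, map_add, hu, hv]
  | tmul u v => simp

theorem pure2 (γ : H →ₗ[k] T ⊗[k] T) (q : (H ⊗[k] H) ⊗[k] H) :
    D1head γ (TensorProduct.assoc k H H H q)
      = TensorProduct.assoc k T T H
          (LinearMap.rTensor H (γ ∘ₗ (HopfAlgebra.antipode k))
            ((TensorProduct.comm k H H)
              (LinearMap.rTensor H
                (mul' k H ∘ₗ LinearMap.lTensor H (HopfAlgebra.antipode k)) q))) := by
  induction q using TensorProduct.induction_on with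
  | zero => simp
  | add u v hu hv => simp only [map_add, hu, hv]
  | tmul w c =>
    induction w using TensorProduct.induction_on with
    | zero => simp [zero_tmul]
    | add u v hu hv => simp only [add_tmul, map_add, hu, hv]
    | tmul a b =>
      simp only [D1head, LinearMap.comp_apply, LinearEquiv.coe_coe,
        TensorProduct.assoc_symm_tmul, TensorProduct.assoc_tmul, TensorProduct.comm_tmul,
        LinearMap.lTensor_tmul, LinearMap.rTensor_tmul, TensorProduct.map_tmul]
      generalize γ (HopfAlgebra.antipode (R := k) c) = g
      induction g using TensorProduct.induction_on with
      | zero => simp only [TensorProduct.zero_tmul, TensorProduct.tmul_zero, map_zero]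
      | add u v hu hv =>
          simp only [TensorProduct.add_tmul, TensorProduct.tmul_add, map_add, hu, hv]
      | tmul u v =>
          simp only [TensorProduct.assoc_tmul, TensorProduct.assoc_symm_tmul,
            TensorProduct.comm_tmul, LinearMap.rTensor_tmul, LinearMap.lTensor_tmul,
            TensorProduct.map_tmul, LinearMap.mul'_apply, LinearMap.comp_apply,
            LinearMap.id_coe, id_eq, LinearEquiv.coe_coe]

theorem honly (γ : H →ₗ[k] T ⊗[k] T) :
    D1head γ ∘ₗ LinearMap.lTensor H Coalgebra.comul ∘ₗ Coalgebra.comul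
      = LinearMap.lTensor T iota ∘ₗ (γ ∘ₗ (HopfAlgebra.antipode k)) := by
  apply LinearMap.ext; intro h
  simp only [LinearMap.comp_apply]
  have c1 : LinearMap.lTensor H (Coalgebra.comul : H →ₗ[k] H ⊗[k] H) (Coalgebra.comul h)
      = TensorProduct.assoc k H H H
          (LinearMap.rTensor H Coalgebra.comul (Coalgebra.comul h)) :=
    (Coalgebra.coassoc_apply h).symm
  rw [c1, pure2]
  have c2 : LinearMap.rTensor H (mul' k H ∘ₗ LinearMap.lTensor H (HopfAlgebra.antipode k))
        (LinearMap.rTensor H (Coalgebra.comul : H →ₗ[k] H ⊗[k] H) (Coalgebra.comul h))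
      = LinearMap.rTensor H (Algebra.linearMap k H ∘ₗ Coalgebra.counit)
          (Coalgebra.comul h) := by
    rw [rT_rT]
    exact LinearMap.congr_fun
      (congrArg (LinearMap.rTensor H) (HopfAlgebra.mul_antipode_lTensor_comul (R := k)))
      (Coalgebra.comul h)
  rw [c2]
  have c2b : LinearMap.rTensor H (Algebra.linearMap k H ∘ₗ (Coalgebra.counit : H →ₗ[k] k))
        (Coalgebra.comul h)
      = LinearMap.rTensor H (Algebra.linearMap k H)
          (LinearMap.rTensor H Coalgebra.counit (Coalgebra.comul h)) := (rT_rT _ _ _).symm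
  rw [c2b, Coalgebra.rTensor_counit_comul]
  have c3 : LinearMap.rTensor H (Algebra.linearMap k H) ((1 : k) ⊗ₜ[k] h)
      = (1 : H) ⊗ₜ[k] h := by simp
  rw [c3]
  have c4 : (TensorProduct.comm k H H) ((1 : H) ⊗ₜ[k] h) = h ⊗ₜ[k] (1 : H) := rfl
  rw [c4]
  have c5 : LinearMap.rTensor H (γ ∘ₗ (HopfAlgebra.antipode k)) (h ⊗ₜ[k] (1 : H))
      = (γ (HopfAlgebra.antipode (R := k) h)) ⊗ₜ[k] (1 : H) := rfl
  rw [c5, glu2]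

theorem s3 (w : T ⊗[k] (T ⊗[k] T)) :
    Phi' (LinearMap.lTensor T (LinearMap.lTensor T iota) w)
      = (mul' k T (LinearMap.lTensor T (mul' k T)
          (TensorProduct.assoc k T T T
            (LinearMap.rTensor T (TensorProduct.comm k T T).toLinearMap
              ((TensorProduct.assoc k T T T).symm w))))) ⊗ₜ[k] (1 : H) := by
  induction w using TensorProduct.induction_on with
  | zero => simp
  | add u v hu hv => simp only [map_add, hu, hv, add_tmul]
  | tmul t w2 =>
    induction w2 using TensorProduct.induction_on with
    | zero => simp [tmul_zero]
    | add u v hu hv => simp only [tmul_add, map_add, hu, hv, add_tmul]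
    | tmul u v =>
      simp [Phi', mul'_apply, Algebra.TensorProduct.tmul_mul_tmul, mul_assoc]

theorem main_key
    (hcoassoc : ∀ x : T,
      (TensorProduct.map ρ.toLinearMap LinearMap.id) (ρ x)
        = (TensorProduct.assoc k T H H).symm
            ((TensorProduct.map LinearMap.id Coalgebra.comul) (ρ x)))
    (hβ : ∀ x y : T, β (x ⊗ₜ[k] y) = (x ⊗ₜ[k] (1 : H)) * ρ y)
    (hβbij : Function.Bijective β)
    (hγ : ∀ h : H, β (γ h) = (1 : T) ⊗ₜ[k] h) (x : T) :
    β ((LinearMap.lTensor T (LinearMap.mul' k T))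
        ((TensorProduct.assoc k T T T)
          ((LinearMap.rTensor T (TensorProduct.comm k T T).toLinearMap)
            ((TensorProduct.assoc k T T T).symm
              ((LinearMap.lTensor T (γ ∘ₗ HopfAlgebra.antipode (R := k))) (ρ x))))))
      = (LinearMap.mul' k T
          ((LinearMap.lTensor T (LinearMap.mul' k T))
            ((TensorProduct.assoc k T T T)
              ((LinearMap.rTensor T (TensorProduct.comm k T T).toLinearMap)
                ((TensorProduct.assoc k T T T).symm
                  ((LinearMap.lTensor T (γ ∘ₗ HopfAlgebra.antipode (R := k))) (ρ x)))))))
        ⊗ₜ[k] (1 : H) := by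
  have step5 : (TensorProduct.map LinearMap.id ρ.toLinearMap)
        ∘ₗ (γ ∘ₗ HopfAlgebra.antipode (R := k))
      = Xi0 γ ∘ₗ Coalgebra.comul := by
    apply LinearMap.ext; intro h
    simp only [LinearMap.comp_apply, Xi0, LinearEquiv.coe_coe]
    exact colinearS ρ β γ hcoassoc hβ hβbij hγ h
  calc β ((LinearMap.lTensor T (LinearMap.mul' k T))
        ((TensorProduct.assoc k T T T)
          ((LinearMap.rTensor T (TensorProduct.comm k T T).toLinearMap)
            ((TensorProduct.assoc k T T T).symm
              ((LinearMap.lTensor T (γ ∘ₗ HopfAlgebra.antipode (R := k))) (ρ x))))))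
      = mul' k (T ⊗[k] H)
          (TensorProduct.map iota
            (mul' k (T ⊗[k] H) ∘ₗ TensorProduct.map ρ.toLinearMap ρ.toLinearMap)
            ((TensorProduct.assoc k T T T)
              ((LinearMap.rTensor T (TensorProduct.comm k T T).toLinearMap)
                ((TensorProduct.assoc k T T T).symm
                  ((LinearMap.lTensor T (γ ∘ₗ HopfAlgebra.antipode (R := k))) (ρ x)))))) :=
        s1 ρ β hβ _
    _ = mul' k (T ⊗[k] H)
          (TensorProduct.map iota (mul' k (T ⊗[k] H))
            (TensorProduct.map LinearMap.id
              (TensorProduct.map ρ.toLinearMap ρ.toLinearMap)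
              ((TensorProduct.assoc k T T T)
                ((LinearMap.rTensor T (TensorProduct.comm k T T).toLinearMap)
                  ((TensorProduct.assoc k T T T).symm
                    ((LinearMap.lTensor T (γ ∘ₗ HopfAlgebra.antipode (R := k))) (ρ x))))))) := by
        rw [map_map]
        try exact rfl
    _ = mul' k (T ⊗[k] H)
          (TensorProduct.map iota (mul' k (T ⊗[k] H))
            (TensorProduct.assoc k T (T ⊗[k] H) (T ⊗[k] H)
              (LinearMap.rTensor (T ⊗[k] H)
                  (TensorProduct.comm k (T ⊗[k] H) T).toLinearMap
                ((TensorProduct.assoc k (T ⊗[k] H) T (T ⊗[k] H)).symm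
                  (TensorProduct.map ρ.toLinearMap
                    (TensorProduct.map LinearMap.id ρ.toLinearMap)
                    ((LinearMap.lTensor T (γ ∘ₗ HopfAlgebra.antipode (R := k))) (ρ x))))))) := by
        rw [perm_nat]
        try exact rfl
    _ = mul' k (T ⊗[k] H)
          (TensorProduct.map iota (mul' k (T ⊗[k] H))
            (TensorProduct.assoc k T (T ⊗[k] H) (T ⊗[k] H)
              (LinearMap.rTensor (T ⊗[k] H)
                  (TensorProduct.comm k (T ⊗[k] H) T).toLinearMap
                ((TensorProduct.assoc k (T ⊗[k] H) T (T ⊗[k] H)).symm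
                  (TensorProduct.map ρ.toLinearMap
                    (Xi0 γ ∘ₗ Coalgebra.comul) (ρ x)))))) := by
        rw [lTensor_eq_map (M := T) (γ ∘ₗ HopfAlgebra.antipode (R := k)), map_map, step5]
        try exact rfl
    _ = mul' k (T ⊗[k] H)
          (TensorProduct.map iota (mul' k (T ⊗[k] H))
            (TensorProduct.assoc k T (T ⊗[k] H) (T ⊗[k] H)
              (LinearMap.rTensor (T ⊗[k] H)
                  (TensorProduct.comm k (T ⊗[k] H) T).toLinearMap
                ((TensorProduct.assoc k (T ⊗[k] H) T (T ⊗[k] H)).symm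
                  (TensorProduct.map LinearMap.id (Xi0 γ)
                    (TensorProduct.map LinearMap.id Coalgebra.comul
                      (TensorProduct.map ρ.toLinearMap LinearMap.id (ρ x)))))))) := by
        rw [map_map, map_map]
        try exact rfl
    _ = mul' k (T ⊗[k] H)
          (TensorProduct.map iota (mul' k (T ⊗[k] H))
            (TensorProduct.assoc k T (T ⊗[k] H) (T ⊗[k] H)
              (LinearMap.rTensor (T ⊗[k] H)
                  (TensorProduct.comm k (T ⊗[k] H) T).toLinearMap
                ((TensorProduct.assoc k (T ⊗[k] H) T (T ⊗[k] H)).symm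
                  (TensorProduct.map LinearMap.id (Xi0 γ)
                    (TensorProduct.map LinearMap.id Coalgebra.comul
                      ((TensorProduct.assoc k T H H).symm
                        ((TensorProduct.map LinearMap.id Coalgebra.comul) (ρ x))))))))) := by
        rw [hcoassoc x]
        try exact rfl
    _ = mul' k (T ⊗[k] H)
          (TensorProduct.map iota (mul' k (T ⊗[k] H))
            (TensorProduct.assoc k T (T ⊗[k] H) (T ⊗[k] H)
              (LinearMap.rTensor (T ⊗[k] H)
                  (TensorProduct.comm k (T ⊗[k] H) T).toLinearMap
                ((TensorProduct.assoc k (T ⊗[k] H) T (T ⊗[k] H)).symm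
                  (LinearMap.lTensor (T ⊗[k] H) (Xi0 γ)
                    ((TensorProduct.assoc k T H (H ⊗[k] H)).symm
                      (TensorProduct.map LinearMap.id
                        (TensorProduct.map LinearMap.id Coalgebra.comul)
                        ((TensorProduct.map LinearMap.id Coalgebra.comul) (ρ x))))))))) := by
        have n := TensorProduct.map_map_assoc_symm (LinearMap.id : T →ₗ[k] T)
          (LinearMap.id : H →ₗ[k] H) (Coalgebra.comul : H →ₗ[k] H ⊗[k] H)
          ((TensorProduct.map LinearMap.id Coalgebra.comul) (ρ x))
        rw [TensorProduct.map_id] at n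
        rw [n]
        try exact rfl
    _ = Phi' (LinearMap.lTensor T (D1head γ)
          (TensorProduct.map LinearMap.id
            (TensorProduct.map LinearMap.id Coalgebra.comul)
            ((TensorProduct.map LinearMap.id Coalgebra.comul) (ρ x)))) :=
        pureMain γ _
    _ = Phi' (TensorProduct.map LinearMap.id
          (D1head γ ∘ₗ LinearMap.lTensor H Coalgebra.comul ∘ₗ Coalgebra.comul) (ρ x)) := by
        rw [lTensor_eq_map (M := T) (D1head γ), map_map, map_map]
        try exact rfl
    _ = Phi' (TensorProduct.map LinearMap.id
          (LinearMap.lTensor T iota ∘ₗ (γ ∘ₗ HopfAlgebra.antipode (R := k))) (ρ x)) := by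
        rw [honly]
        try exact rfl
    _ = Phi' (TensorProduct.map LinearMap.id (LinearMap.lTensor T iota)
          (TensorProduct.map LinearMap.id (γ ∘ₗ HopfAlgebra.antipode (R := k)) (ρ x))) := by
        rw [map_map]
        try exact rfl
    _ = (LinearMap.mul' k T
          ((LinearMap.lTensor T (LinearMap.mul' k T))
            ((TensorProduct.assoc k T T T)
              ((LinearMap.rTensor T (TensorProduct.comm k T T).toLinearMap)
                ((TensorProduct.assoc k T T T).symm
                  ((LinearMap.lTensor T (γ ∘ₗ HopfAlgebra.antipode (R := k))) (ρ x)))))))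
        ⊗ₜ[k] (1 : H) :=
        s3 (TensorProduct.map LinearMap.id (γ ∘ₗ HopfAlgebra.antipode (R := k)) (ρ x))

end Galois

end GaloisAux

/-- For a faithfully flat `H`-Galois object `T`, the element
`S(x₍₁₎)⁽¹⁾ ⊗ (x₍₀₎·S(x₍₁₎)⁽²⁾)` of `T ⊗ T` lies in `T ⊗ k·1`, i.e. it is in
the image of `t ↦ t ⊗ 1`. -/
theorem stmt_0
    {k : Type*} [CommRing k] {H : Type*} [Ring H] [HopfAlgebra k H]
    {T : Type*} [Ring T] [Algebra k T]
    -- `ρ` is an algebra map making `T` a right `H`-comodule algebra: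
    (ρ : T →ₐ[k] T ⊗[k] H)
    (hcoassoc : ∀ x : T,
      (TensorProduct.map ρ.toLinearMap LinearMap.id) (ρ x)
        = (TensorProduct.assoc k T H H).symm
            ((TensorProduct.map LinearMap.id Coalgebra.comul) (ρ x)))
    (hcounit : ∀ x : T,
      (TensorProduct.rid k T)
        ((TensorProduct.map LinearMap.id Coalgebra.counit) (ρ x)) = x)
    -- the coinvariants are exactly `k·1`:
    (hcoinv : {t : T | ρ t = t ⊗ₜ[k] (1 : H)} = Set.range (algebraMap k T))
    -- `T` is faithfully flat over `k`:
    (hflat : Module.FaithfullyFlat k T)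
    -- the canonical (Galois) map `β(x ⊗ y) = x·y₍₀₎ ⊗ y₍₁₎`, assumed bijective:
    (β : T ⊗[k] T →ₗ[k] T ⊗[k] H)
    (hβ : ∀ x y : T, β (x ⊗ₜ[k] y) = (x ⊗ₜ[k] (1 : H)) * ρ y)
    (hβbij : Function.Bijective β)
    -- `γ(h) = β⁻¹(1 ⊗ h) = h⁽¹⁾ ⊗ h⁽²⁾`:
    (γ : H →ₗ[k] T ⊗[k] T)
    (hγ : ∀ h : H, β (γ h) = (1 : T) ⊗ₜ[k] h)
    :
    ∀ x : T,
      (LinearMap.lTensor T (LinearMap.mul' k T))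
        ((TensorProduct.assoc k T T T)
          ((LinearMap.rTensor T (TensorProduct.comm k T T).toLinearMap)
            ((TensorProduct.assoc k T T T).symm
              ((LinearMap.lTensor T (γ ∘ₗ HopfAlgebra.antipode (R := k))) (ρ x)))))
        ∈ Set.range (fun t : T => t ⊗ₜ[k] (1 : T)) := by
  intro x
  have key := GaloisAux.main_key ρ β γ hcoassoc hβ hβbij hγ x
  refine ⟨LinearMap.mul' k T
    ((LinearMap.lTensor T (LinearMap.mul' k T))
      ((TensorProduct.assoc k T T T)
        ((LinearMap.rTensor T (TensorProduct.comm k T T).toLinearMap)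
          ((TensorProduct.assoc k T T T).symm
            ((LinearMap.lTensor T (γ ∘ₗ HopfAlgebra.antipode (R := k))) (ρ x)))))), ?_⟩
  apply hβbij.injective
  simp only
  rw [hβ, _root_.map_one ρ, mul_one]
  exact key.symm
end

section
/- Let T be a faithfully flat H-Galois object over k. Then μ : T → T ⊗ T ⊗ T is a unital algebra homomorphism when the middle tensor factor carries the opposite multiplication: μ(1) = 1 ⊗ 1 ⊗ 1, and writing μ(x) = x⁽¹⁾ ⊗ x⁽²⁾ ⊗ x⁽³⁾, one has μ(x·y) = x⁽¹⁾y⁽¹⁾ ⊗ y⁽²⁾x⁽²⁾ ⊗ x⁽³⁾y⁽³⁾ for all x, y ∈ T. -/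
open TensorProduct LinearMap HopfAlgebra

set_option maxHeartbeats 1000000 in
set_option synthInstance.maxHeartbeats 400000 in
/-- For a faithfully flat `H`-Galois object `T`, the map
`μ(x) = x₍₀₎ ⊗ x₍₁₎⁽¹⁾ ⊗ x₍₁₎⁽²⁾` is a unital algebra homomorphism
`T → T ⊗ Tᵒᵖ ⊗ T` (middle factor with opposite multiplication):
`μ(1) = 1 ⊗ 1 ⊗ 1` and `μ(x·y) = x⁽¹⁾y⁽¹⁾ ⊗ y⁽²⁾x⁽²⁾ ⊗ x⁽³⁾y⁽³⁾`. -/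
theorem stmt_2
    {k : Type*} [CommRing k] {H : Type*} [Ring H] [HopfAlgebra k H]
    {T : Type*} [Ring T] [Algebra k T]
    -- `ρ` is an algebra map making `T` a right `H`-comodule algebra:
    (ρ : T →ₐ[k] T ⊗[k] H)
    (hcoassoc : ∀ x : T,
      (TensorProduct.map ρ.toLinearMap LinearMap.id) (ρ x)
        = (TensorProduct.assoc k T H H).symm
            ((TensorProduct.map LinearMap.id Coalgebra.comul) (ρ x)))
    (hcounit : ∀ x : T,
      (TensorProduct.rid k T)
        ((TensorProduct.map LinearMap.id Coalgebra.counit) (ρ x)) = x)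
    -- the coinvariants are exactly `k·1`:
    (hcoinv : {t : T | ρ t = t ⊗ₜ[k] (1 : H)} = Set.range (algebraMap k T))
    -- `T` is faithfully flat over `k`:
    (hflat : Module.FaithfullyFlat k T)
    -- the canonical (Galois) map `β(x ⊗ y) = x·y₍₀₎ ⊗ y₍₁₎`, assumed bijective:
    (β : T ⊗[k] T →ₗ[k] T ⊗[k] H)
    (hβ : ∀ x y : T, β (x ⊗ₜ[k] y) = (x ⊗ₜ[k] (1 : H)) * ρ y)
    (hβbij : Function.Bijective β)
    -- `γ(h) = β⁻¹(1 ⊗ h) = h⁽¹⁾ ⊗ h⁽²⁾`: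
    (γ : H →ₗ[k] T ⊗[k] T)
    (hγ : ∀ h : H, β (γ h) = (1 : T) ⊗ₜ[k] h)
    -- `μ(x) = x₍₀₎ ⊗ x₍₁₎⁽¹⁾ ⊗ x₍₁₎⁽²⁾`:
    (μ : T →ₗ[k] T ⊗[k] (T ⊗[k] T))
    (hμ : μ = (LinearMap.lTensor T γ) ∘ₗ ρ.toLinearMap)
    -- `j` is `μ` with the middle tensorand regarded in the opposite algebra `Tᵐᵒᵖ`:
    (j : T →ₗ[k] T ⊗[k] (Tᵐᵒᵖ ⊗[k] T))
    (hj : j = (LinearMap.lTensor T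
        (TensorProduct.map (MulOpposite.opLinearEquiv k : T ≃ₗ[k] Tᵐᵒᵖ).toLinearMap
          (LinearMap.id : T →ₗ[k] T))) ∘ₗ μ) :
    j 1 = 1 ∧ ∀ x y : T, j (x * y) = j x * j y := by
  classical
  -- The linear equivalence `T ⊗ T ≃ Tᵐᵒᵖ ⊗ T`.
  set E : T ⊗[k] T ≃ₗ[k] Tᵐᵒᵖ ⊗[k] T :=
    TensorProduct.congr (MulOpposite.opLinearEquiv k : T ≃ₗ[k] Tᵐᵒᵖ)
      (LinearEquiv.refl k T) with hE
  -- `δ h = op h⁽¹⁾ ⊗ h⁽²⁾`.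
  set δ : H →ₗ[k] Tᵐᵒᵖ ⊗[k] T := E.toLinearMap ∘ₗ γ with hδ
  -- `B` is `β` transported along `E`.
  set B : Tᵐᵒᵖ ⊗[k] T →ₗ[k] T ⊗[k] H := β ∘ₗ (E.symm : Tᵐᵒᵖ ⊗[k] T ≃ₗ[k] T ⊗[k] T).toLinearMap
    with hB
  have hBinj : Function.Injective B := by
    rw [hB]
    simp only [LinearMap.coe_comp, LinearEquiv.coe_coe]
    exact hβbij.injective.comp E.symm.injective
  have hBtmul : ∀ (c : Tᵐᵒᵖ) (d : T),
      B (c ⊗ₜ[k] d) = (c.unop ⊗ₜ[k] (1 : H)) * ρ d := by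
    intro c d
    rw [hB]
    simp only [LinearMap.comp_apply, LinearEquiv.coe_coe, hE, TensorProduct.congr_symm_tmul]
    simp [hβ]
  have hBδ : ∀ h : H, B (δ h) = (1 : T) ⊗ₜ[k] h := by
    intro h
    rw [hδ, hB]
    simp [hγ h]
  -- key computation, linear in `u`.
  have hA' : ∀ (u : Tᵐᵒᵖ ⊗[k] T) (c : Tᵐᵒᵖ) (d : T),
      B (u * (c ⊗ₜ[k] d)) = (c.unop ⊗ₜ[k] (1 : H)) * B u * ρ d := by
    intro u c d
    induction u using TensorProduct.induction_on with
    | zero => simp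
    | tmul a b =>
        rw [Algebra.TensorProduct.tmul_mul_tmul, hBtmul, hBtmul, MulOpposite.unop_mul,
          map_mul]
        simp only [mul_assoc]
        conv_rhs => rw [← mul_assoc, Algebra.TensorProduct.tmul_mul_tmul, mul_one]
    | add u v hu hv => rw [add_mul, map_add, hu, hv, map_add, mul_add, add_mul]
  -- hence `B (δ h * v) = (1 ⊗ h) * B v`.
  have hA : ∀ (h : H) (v : Tᵐᵒᵖ ⊗[k] T),
      B (δ h * v) = ((1 : T) ⊗ₜ[k] h) * B v := by
    intro h v
    induction v using TensorProduct.induction_on with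
    | zero => simp
    | tmul c d =>
        rw [hA', hBδ, hBtmul]
        rw [show (c.unop ⊗ₜ[k] (1 : H)) * ((1 : T) ⊗ₜ[k] h)
            = ((1 : T) ⊗ₜ[k] h) * (c.unop ⊗ₜ[k] (1 : H)) from by
          rw [Algebra.TensorProduct.tmul_mul_tmul, Algebra.TensorProduct.tmul_mul_tmul,
            one_mul, mul_one, one_mul, mul_one]]
        rw [mul_assoc]
    | add u v hu hv => rw [mul_add, map_add, hu, hv, map_add, mul_add]
  -- `δ` is multiplicative and unital.
  have hδmul : ∀ g h : H, δ (g * h) = δ g * δ h := by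
    intro g h
    apply hBinj
    rw [hBδ, hA, hBδ, Algebra.TensorProduct.tmul_mul_tmul, one_mul]
  have hδone : δ 1 = 1 := by
    apply hBinj
    rw [hBδ, show (1 : Tᵐᵒᵖ ⊗[k] T) = (1 : Tᵐᵒᵖ) ⊗ₜ[k] (1 : T) from rfl, hBtmul]
    simp
  let δA : H →ₐ[k] Tᵐᵒᵖ ⊗[k] T := AlgHom.ofLinearMap δ hδone hδmul
  let J : T →ₐ[k] T ⊗[k] (Tᵐᵒᵖ ⊗[k] T) :=
    (Algebra.TensorProduct.map (AlgHom.id k T) δA).comp ρ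
  have hjJ : ∀ x : T, j x = J x := by
    intro x
    rw [hj, hμ]
    simp only [LinearMap.comp_apply]
    have hEmap : ∀ w : T ⊗[k] T,
        (TensorProduct.map (MulOpposite.opLinearEquiv k : T ≃ₗ[k] Tᵐᵒᵖ).toLinearMap
          (LinearMap.id : T →ₗ[k] T)) w = E w := by
      intro w
      induction w using TensorProduct.induction_on with
      | zero => simp
      | tmul a b => simp [hE]
      | add u v hu hv => rw [map_add, map_add, hu, hv]
    have key : ∀ u : T ⊗[k] H,
        (LinearMap.lTensor T
          (TensorProduct.map (MulOpposite.opLinearEquiv k : T ≃ₗ[k] Tᵐᵒᵖ).toLinearMap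
            (LinearMap.id : T →ₗ[k] T))) ((LinearMap.lTensor T γ) u)
          = (Algebra.TensorProduct.map (AlgHom.id k T) δA) u := by
      intro u
      induction u using TensorProduct.induction_on with
      | zero => simp only [map_zero]
      | tmul t h =>
          rw [LinearMap.lTensor_tmul, LinearMap.lTensor_tmul, Algebra.TensorProduct.map_tmul,
            hEmap]
          have h1 : δA h = E (γ h) := by
            rw [show δA h = δ h from rfl, hδ, LinearMap.comp_apply]; rfl
          rw [h1, AlgHom.coe_id, id_eq]
      | add u v hu hv => rw [map_add, map_add, hu, hv, map_add]
    exact key (ρ x)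
  refine ⟨?_, ?_⟩
  · rw [hjJ]; exact J.map_one
  · intro x y
    rw [hjJ, hjJ, hjJ]
    exact map_mul J x y
end

section
/- Let T be a faithfully flat H-Galois object over k. Then the map μ satisfies the first torsor axiom: (id_T ⊗ ∇)(μ(x)) = x ⊗ 1 for all x ∈ T, where ∇ : T ⊗ T → T is the multiplication of T. -/
open TensorProduct LinearMap HopfAlgebra

/-- For a faithfully flat `H`-Galois object `T`, the map
`μ(x) = x₍₀₎ ⊗ x₍₁₎⁽¹⁾ ⊗ x₍₁₎⁽²⁾` satisfies the first torsor axiom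
`(id_T ⊗ ∇)(μ(x)) = x ⊗ 1`. -/
theorem stmt_3
    {k : Type} [CommRing k] {H : Type} [Ring H] [HopfAlgebra k H]
    {T : Type} [Ring T] [Algebra k T]
    -- `ρ` is an algebra map making `T` a right `H`-comodule algebra:
    (ρ : T →ₐ[k] T ⊗[k] H)
    (hcoassoc : ∀ x : T,
      (TensorProduct.map ρ.toLinearMap LinearMap.id) (ρ x)
        = (TensorProduct.assoc k T H H).symm
            ((TensorProduct.map LinearMap.id Coalgebra.comul) (ρ x)))
    (hcounit : ∀ x : T,
      (TensorProduct.rid k T)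
        ((TensorProduct.map LinearMap.id Coalgebra.counit) (ρ x)) = x)
    -- the coinvariants are exactly `k·1`:
    (hcoinv : {t : T | ρ t = t ⊗ₜ[k] (1 : H)} = Set.range (algebraMap k T))
    -- `T` is faithfully flat over `k`:
    (hflat : Module.FaithfullyFlat k T)
    -- the canonical (Galois) map `β`, assumed bijective:
    (β : T ⊗[k] T →ₗ[k] T ⊗[k] H)
    (hβ : ∀ x y : T, β (x ⊗ₜ[k] y) = (x ⊗ₜ[k] (1 : H)) * ρ y)
    (hβbij : Function.Bijective β)
    -- `γ(h) = β⁻¹(1 ⊗ h) = h⁽¹⁾ ⊗ h⁽²⁾`: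
    (γ : H →ₗ[k] T ⊗[k] T)
    (hγ : ∀ h : H, β (γ h) = (1 : T) ⊗ₜ[k] h)
    -- `μ(x) = x₍₀₎ ⊗ x₍₁₎⁽¹⁾ ⊗ x₍₁₎⁽²⁾`:
    (μ : T →ₗ[k] T ⊗[k] (T ⊗[k] T))
    (hμ : μ = (LinearMap.lTensor T γ) ∘ₗ ρ.toLinearMap) :
    ∀ x : T, (LinearMap.lTensor T (LinearMap.mul' k T)) (μ x) = x ⊗ₜ[k] (1 : T) := by
  intro x
  -- `rid ∘ (id ⊗ ε)` is multiplicative w.r.t. left mult by `x ⊗ 1`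
  have key : ∀ (x : T) (z : T ⊗[k] H),
      (TensorProduct.rid k T) ((TensorProduct.map LinearMap.id Coalgebra.counit)
        ((x ⊗ₜ[k] (1 : H)) * z))
      = x * (TensorProduct.rid k T) ((TensorProduct.map LinearMap.id Coalgebra.counit) z) := by
    intro x z
    induction z using TensorProduct.induction_on with
    | zero => simp
    | tmul a h =>
        simp [Algebra.TensorProduct.tmul_mul_tmul, mul_smul_comm]
    | add u v hu hv => simp [mul_add, hu, hv]
  -- multiplication factors as `rid ∘ (id ⊗ ε) ∘ β`
  have hmul : ∀ u : T ⊗[k] T, (LinearMap.mul' k T) u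
      = (TensorProduct.rid k T) ((TensorProduct.map LinearMap.id Coalgebra.counit) (β u)) := by
    intro u
    induction u using TensorProduct.induction_on with
    | zero => simp
    | tmul a b => rw [hβ, key, hcounit, LinearMap.mul'_apply]
    | add u v hu hv => simp [hu, hv]
  -- hence `∇ ∘ γ = algebraMap ∘ ε`
  have hmulγ : ∀ h : H, (LinearMap.mul' k T) (γ h) = algebraMap k T (Coalgebra.counit h) := by
    intro h
    rw [hmul, hγ]
    simp [TensorProduct.map_tmul, Algebra.algebraMap_eq_smul_one]
  have hcomp : (LinearMap.mul' k T) ∘ₗ γ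
      = (Algebra.linearMap k T) ∘ₗ (Coalgebra.counit : H →ₗ[k] k) := by
    ext h; exact hmulγ h
  rw [hμ, LinearMap.comp_apply, ← LinearMap.comp_apply, ← LinearMap.lTensor_comp, hcomp,
    LinearMap.lTensor_comp, LinearMap.comp_apply]
  have step : ∀ w : T ⊗[k] k,
      (LinearMap.lTensor T (Algebra.linearMap k T)) w
        = ((TensorProduct.rid k T) w) ⊗ₜ[k] (1 : T) := by
    intro w
    induction w using TensorProduct.induction_on with
    | zero => simp
    | tmul a c => simp [Algebra.algebraMap_eq_smul_one, TensorProduct.tmul_smul,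
        TensorProduct.smul_tmul]
    | add u v hu hv => simp [hu, hv, TensorProduct.add_tmul]
  rw [step]
  show (TensorProduct.rid k T) ((TensorProduct.map LinearMap.id Coalgebra.counit) (ρ x)) ⊗ₜ[k] (1 : T)
      = x ⊗ₜ[k] 1
  rw [hcounit]
end

section
/- Let T be a faithfully flat H-Galois object over k. Then the map μ satisfies the second torsor axiom: (∇ ⊗ id_T)(μ(x)) = 1 ⊗ x for all x ∈ T, where ∇ : T ⊗ T → T is the multiplication of T. -/
open TensorProduct LinearMap HopfAlgebra

/-- For a faithfully flat `H`-Galois object `T`, the map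
`μ(x) = x₍₀₎ ⊗ x₍₁₎⁽¹⁾ ⊗ x₍₁₎⁽²⁾` satisfies the second torsor axiom
`(∇ ⊗ id_T)(μ(x)) = 1 ⊗ x`. -/
theorem stmt_4
    {k : Type*} [CommRing k] {H : Type*} [Ring H] [HopfAlgebra k H]
    {T : Type*} [Ring T] [Algebra k T]
    -- `ρ` is an algebra map making `T` a right `H`-comodule algebra:
    (ρ : T →ₐ[k] T ⊗[k] H)
    (hcoassoc : ∀ x : T,
      (TensorProduct.map ρ.toLinearMap LinearMap.id) (ρ x)
        = (TensorProduct.assoc k T H H).symm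
            ((TensorProduct.map LinearMap.id Coalgebra.comul) (ρ x)))
    (hcounit : ∀ x : T,
      (TensorProduct.rid k T)
        ((TensorProduct.map LinearMap.id Coalgebra.counit) (ρ x)) = x)
    -- the coinvariants are exactly `k·1`:
    (hcoinv : {t : T | ρ t = t ⊗ₜ[k] (1 : H)} = Set.range (algebraMap k T))
    -- `T` is faithfully flat over `k`:
    (hflat : Module.FaithfullyFlat k T)
    -- the canonical (Galois) map `β(x ⊗ y) = x·y₍₀₎ ⊗ y₍₁₎`, assumed bijective:
    (β : T ⊗[k] T →ₗ[k] T ⊗[k] H)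
    (hβ : ∀ x y : T, β (x ⊗ₜ[k] y) = (x ⊗ₜ[k] (1 : H)) * ρ y)
    (hβbij : Function.Bijective β)
    -- `γ(h) = β⁻¹(1 ⊗ h) = h⁽¹⁾ ⊗ h⁽²⁾`:
    (γ : H →ₗ[k] T ⊗[k] T)
    (hγ : ∀ h : H, β (γ h) = (1 : T) ⊗ₜ[k] h)
    -- `μ(x) = x₍₀₎ ⊗ x₍₁₎⁽¹⁾ ⊗ x₍₁₎⁽²⁾`:
    (μ : T →ₗ[k] T ⊗[k] (T ⊗[k] T))
    (hμ : μ = (LinearMap.lTensor T γ) ∘ₗ ρ.toLinearMap) :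
    ∀ x : T,
      (LinearMap.rTensor T (LinearMap.mul' k T))
        ((TensorProduct.assoc k T T T).symm (μ x)) = (1 : T) ⊗ₜ[k] x := by
  intro x
  apply hβbij.injective
  have h1 : β ((1 : T) ⊗ₜ[k] x) = ρ x := by
    rw [hβ]
    have : (1 : T) ⊗ₜ[k] (1 : H) = (1 : T ⊗[k] H) := rfl
    rw [this, one_mul]
  have hmulleft : ∀ (t : T) (z : T ⊗[k] T),
      β (((t ⊗ₜ[k] (1 : T)) : T ⊗[k] T) * z) = (t ⊗ₜ[k] (1 : H)) * β z := by
    intro t z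
    induction z using TensorProduct.induction_on with
    | zero => simp only [mul_zero, map_zero]
    | tmul a b =>
        rw [Algebra.TensorProduct.tmul_mul_tmul, one_mul, hβ, hβ, ← mul_assoc,
          Algebra.TensorProduct.tmul_mul_tmul, mul_one]
    | add u v hu hv => rw [mul_add, map_add, hu, hv, map_add, mul_add]
  have hassoc : ∀ (t : T) (z : T ⊗[k] T),
      (LinearMap.rTensor T (LinearMap.mul' k T))
        ((TensorProduct.assoc k T T T).symm (t ⊗ₜ[k] z)) = (t ⊗ₜ[k] (1 : T)) * z := by
    intro t z
    induction z using TensorProduct.induction_on with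
    | zero =>
        simp only [TensorProduct.tmul_zero, LinearEquiv.map_zero, LinearMap.map_zero, mul_zero]
    | tmul a b =>
        rw [Algebra.TensorProduct.tmul_mul_tmul, one_mul]
        rfl
    | add u v hu hv => rw [TensorProduct.tmul_add, map_add, map_add, hu, hv, mul_add]
  have key : ∀ (w : T ⊗[k] H),
      β ((LinearMap.rTensor T (LinearMap.mul' k T))
        ((TensorProduct.assoc k T T T).symm ((LinearMap.lTensor T γ) w))) = w := by
    intro w
    induction w using TensorProduct.induction_on with
    | zero => simp only [LinearMap.map_zero, LinearEquiv.map_zero]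
    | tmul t h =>
        rw [LinearMap.lTensor_tmul, hassoc, hmulleft, hγ,
          Algebra.TensorProduct.tmul_mul_tmul, mul_one, one_mul]
    | add u v hu hv => simp only [map_add, hu, hv]
  rw [hμ, h1]
  exact key (ρ x)
end

section
/- Let T be a faithfully flat H-Galois object over k. Then the map μ is coassociative: (id_T ⊗ id_T ⊗ μ)∘μ = (μ ⊗ id_T ⊗ id_T)∘μ as maps T → T ⊗ T ⊗ T ⊗ T ⊗ T. -/
open TensorProduct LinearMap HopfAlgebra

set_option maxHeartbeats 1000000
set_option synthInstance.maxHeartbeats 400000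
set_option linter.unusedVariables false

/-- For a faithfully flat `H`-Galois object `T`, the map
`μ(x) = x₍₀₎ ⊗ x₍₁₎⁽¹⁾ ⊗ x₍₁₎⁽²⁾` is coassociative:
`(id ⊗ id ⊗ μ)∘μ = (μ ⊗ id ⊗ id)∘μ` as maps `T → T⊗T⊗T⊗T⊗T`. -/
theorem stmt_5
    {k : Type*} [CommRing k] {H : Type*} [Ring H] [HopfAlgebra k H]
    {T : Type*} [Ring T] [Algebra k T]
    -- `ρ` is an algebra map making `T` a right `H`-comodule algebra:
    (ρ : T →ₐ[k] T ⊗[k] H)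
    (hcoassoc : ∀ x : T,
      (TensorProduct.map ρ.toLinearMap LinearMap.id) (ρ x)
        = (TensorProduct.assoc k T H H).symm
            ((TensorProduct.map LinearMap.id Coalgebra.comul) (ρ x)))
    (hcounit : ∀ x : T,
      (TensorProduct.rid k T)
        ((TensorProduct.map LinearMap.id Coalgebra.counit) (ρ x)) = x)
    -- the coinvariants are exactly `k·1`:
    (hcoinv : {t : T | ρ t = t ⊗ₜ[k] (1 : H)} = Set.range (algebraMap k T))
    -- `T` is faithfully flat over `k`:
    (hflat : Module.FaithfullyFlat k T)
    -- the canonical (Galois) map `β(x ⊗ y) = x·y₍₀₎ ⊗ y₍₁₎`, assumed bijective: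
    (β : T ⊗[k] T →ₗ[k] T ⊗[k] H)
    (hβ : ∀ x y : T, β (x ⊗ₜ[k] y) = (x ⊗ₜ[k] (1 : H)) * ρ y)
    (hβbij : Function.Bijective β)
    -- `γ(h) = β⁻¹(1 ⊗ h) = h⁽¹⁾ ⊗ h⁽²⁾`:
    (γ : H →ₗ[k] T ⊗[k] T)
    (hγ : ∀ h : H, β (γ h) = (1 : T) ⊗ₜ[k] h)
    -- `μ(x) = x₍₀₎ ⊗ x₍₁₎⁽¹⁾ ⊗ x₍₁₎⁽²⁾`:
    (μ : T →ₗ[k] T ⊗[k] (T ⊗[k] T))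
    (hμ : μ = (LinearMap.lTensor T γ) ∘ₗ ρ.toLinearMap) :
    ∀ x : T,
      (LinearMap.lTensor T (LinearMap.lTensor T μ)) (μ x)
        = (LinearMap.lTensor T (TensorProduct.assoc k T T (T ⊗[k] T)).toLinearMap)
            ((TensorProduct.assoc k T (T ⊗[k] T) (T ⊗[k] T))
              ((LinearMap.rTensor (T ⊗[k] T) μ) (μ x))) := by
  intro x
  set ρl : T →ₗ[k] T ⊗[k] H := ρ.toLinearMap with hρl
  have hρy : ∀ y : T, ρl y = ρ y := fun _ => rfl
  -- multiplication by (x ⊗ 1) is rTensor of mulLeft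
  have hmul : ∀ (a : T) (v : T ⊗[k] H),
      (a ⊗ₜ[k] (1 : H)) * v = rTensor H (LinearMap.mulLeft k a) v := by
    intro a v
    induction v using TensorProduct.induction_on with
    | zero => simp
    | tmul p q => simp [Algebra.TensorProduct.tmul_mul_tmul]
    | add u v hu hv => rw [mul_add, map_add, hu, hv]
  -- Lemma A : compatibility of β with the coactions
  have A : rTensor H β ∘ₗ ((TensorProduct.assoc k T T H).symm.toLinearMap)
        ∘ₗ lTensor T ρl
      = (TensorProduct.assoc k T H H).symm.toLinearMap
        ∘ₗ lTensor T (Coalgebra.comul (R := k) (A := H)) ∘ₗ β := by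
    apply TensorProduct.ext'
    intro a y
    have h1 : ∀ u : T ⊗[k] H,
        rTensor H β ((TensorProduct.assoc k T T H).symm (a ⊗ₜ[k] u))
          = rTensor H (rTensor H (LinearMap.mulLeft k a))
              ((TensorProduct.map ρl LinearMap.id) u) := by
      intro u
      induction u using TensorProduct.induction_on with
      | zero => simp
      | tmul p q =>
        simp only [TensorProduct.assoc_symm_tmul, rTensor_tmul, TensorProduct.map_tmul,
          LinearMap.id_coe, id_eq, hβ, hmul, hρy]
      | add u v hu hv => simp only [tmul_add, map_add, hu, hv]
    have h2 : ∀ w : T ⊗[k] (H ⊗[k] H),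
        rTensor H (rTensor H (LinearMap.mulLeft k a))
            ((TensorProduct.assoc k T H H).symm w)
          = (TensorProduct.assoc k T H H).symm
              (rTensor (H ⊗[k] H) (LinearMap.mulLeft k a) w) := by
      intro w
      induction w using TensorProduct.induction_on with
      | zero => simp
      | tmul t pq =>
        induction pq using TensorProduct.induction_on with
        | zero => simp
        | tmul p q => simp
        | add u v hu hv => simp only [tmul_add, map_add, hu, hv]
      | add u v hu hv => simp only [map_add, hu, hv]
    have h3 : rTensor (H ⊗[k] H) (LinearMap.mulLeft k a) ∘ₗ
          lTensor T (Coalgebra.comul (R := k) (A := H))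
        = lTensor T (Coalgebra.comul (R := k) (A := H)) ∘ₗ
          rTensor H (LinearMap.mulLeft k a) := by
      rw [rTensor_comp_lTensor, lTensor_comp_rTensor]
    calc rTensor H β ((TensorProduct.assoc k T T H).symm ((lTensor T ρl) (a ⊗ₜ[k] y)))
        = rTensor H (rTensor H (LinearMap.mulLeft k a))
            ((TensorProduct.map ρl LinearMap.id) (ρ y)) := by
          simp only [lTensor_tmul]; exact h1 (ρ y)
      _ = rTensor H (rTensor H (LinearMap.mulLeft k a))
            ((TensorProduct.assoc k T H H).symm
              ((TensorProduct.map LinearMap.id Coalgebra.comul) (ρ y))) := by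
          rw [hcoassoc y]
      _ = (TensorProduct.assoc k T H H).symm
            ((rTensor (H ⊗[k] H) (LinearMap.mulLeft k a))
              ((lTensor T (Coalgebra.comul (R := k) (A := H))) (ρ y))) := h2 _
      _ = (TensorProduct.assoc k T H H).symm
            ((lTensor T (Coalgebra.comul (R := k) (A := H)))
              ((rTensor H (LinearMap.mulLeft k a)) (ρ y))) := by
          rw [← comp_apply, ← comp_apply, h3]
      _ = (TensorProduct.assoc k T H H).symm
            ((lTensor T (Coalgebra.comul (R := k) (A := H))) (β (a ⊗ₜ[k] y))) := by
          rw [hβ, hmul]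
  -- injectivity of rTensor of β
  have hinj : Function.Injective (rTensor H β) :=
    (LinearEquiv.rTensor (M := H) (LinearEquiv.ofBijective β hβbij)).injective
  -- β ∘ γ = (1 ⊗ ·)
  have hβγ : β ∘ₗ γ = (TensorProduct.mk k T H) 1 := LinearMap.ext fun h => by
    simpa using hγ h
  -- key: (id ⊗ ρ) ∘ γ = assoc ∘ (γ ⊗ id) ∘ Δ
  have keyγ : ∀ h : H, lTensor T ρl (γ h)
      = (TensorProduct.assoc k T T H)
          (rTensor H γ (Coalgebra.comul (R := k) h)) := by
    intro h
    have e1 : (TensorProduct.assoc k T T H).symm ((lTensor T ρl) (γ h))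
        = (TensorProduct.assoc k T T H).symm
            ((TensorProduct.assoc k T T H)
              (rTensor H γ (Coalgebra.comul (R := k) h))) := by
      apply hinj
      have lhs := LinearMap.congr_fun A (γ h)
      simp only [comp_apply, LinearEquiv.coe_coe] at lhs
      rw [lhs, hγ h]
      rw [LinearEquiv.symm_apply_apply]
      -- RHS : rTensor H β (rTensor H γ (Δ h))
      have h4 : ∀ w : H ⊗[k] H,
          rTensor H β (rTensor H γ w)
            = (TensorProduct.assoc k T H H).symm ((1 : T) ⊗ₜ[k] w) := by
        intro w
        induction w using TensorProduct.induction_on with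
        | zero => simp
        | tmul p q => simp [rTensor_tmul, hγ p]
        | add u v hu hv => simp only [map_add, tmul_add, hu, hv]
      rw [h4]
      congr 1
    simpa using congrArg (TensorProduct.assoc k T T H) e1
  -- Key map identity: (id ⊗ μ)∘γ = assoc ∘ (γ ⊗ γ) ∘ Δ
  have Hkey : lTensor T μ ∘ₗ γ
      = (TensorProduct.assoc k T T (T ⊗[k] T)).toLinearMap
          ∘ₗ TensorProduct.map γ γ ∘ₗ (Coalgebra.comul (R := k) (A := H)) := by
    apply LinearMap.ext; intro h
    have N1 : ∀ w : (T ⊗[k] T) ⊗[k] H,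
        lTensor T (lTensor T γ) ((TensorProduct.assoc k T T H) w)
          = (TensorProduct.assoc k T T (T ⊗[k] T)) (lTensor (T ⊗[k] T) γ w) := by
      intro w
      have : lTensor T (lTensor T γ) ∘ₗ (TensorProduct.assoc k T T H).toLinearMap
          = (TensorProduct.assoc k T T (T ⊗[k] T)).toLinearMap ∘ₗ lTensor (T ⊗[k] T) γ := by
        apply TensorProduct.ext_threefold
        intro p q h
        simp
      exact LinearMap.congr_fun this w
    rw [hμ, comp_apply, lTensor_comp, comp_apply, keyγ h, N1]
    simp only [comp_apply, LinearEquiv.coe_coe]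
    congr 1
    rw [← comp_apply, lTensor_comp_rTensor]
  -- naturality for assoc and map γ γ
  have M1 : ∀ w : (T ⊗[k] H) ⊗[k] H,
      lTensor T (TensorProduct.map γ γ) ((TensorProduct.assoc k T H H) w)
        = (TensorProduct.assoc k T (T ⊗[k] T) (T ⊗[k] T))
            (TensorProduct.map (lTensor T γ) γ w) := by
    intro w
    have : lTensor T (TensorProduct.map γ γ) ∘ₗ (TensorProduct.assoc k T H H).toLinearMap
        = (TensorProduct.assoc k T (T ⊗[k] T) (T ⊗[k] T)).toLinearMap
            ∘ₗ TensorProduct.map (lTensor T γ) γ := by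
      apply TensorProduct.ext_threefold
      intro a h h'
      simp
    exact LinearMap.congr_fun this w
  -- step 3
  have S3 : TensorProduct.map μ γ
      = TensorProduct.map (lTensor T γ) γ ∘ₗ TensorProduct.map ρl LinearMap.id := by
    rw [← TensorProduct.map_comp, ← hμ, comp_id]
  -- step 4
  have S4 : rTensor (T ⊗[k] T) μ ∘ₗ lTensor T γ = TensorProduct.map μ γ := by
    rw [rTensor_comp_lTensor]
  -- assemble
  have hμx : μ x = lTensor T γ (ρ x) := by rw [hμ]; rfl
  calc (lTensor T (lTensor T μ)) (μ x)
      = lTensor T (lTensor T μ ∘ₗ γ) (ρ x) := by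
        rw [hμx, ← comp_apply, ← lTensor_comp]
    _ = lTensor T ((TensorProduct.assoc k T T (T ⊗[k] T)).toLinearMap
          ∘ₗ TensorProduct.map γ γ ∘ₗ (Coalgebra.comul (R := k) (A := H))) (ρ x) := by
        rw [Hkey]
    _ = lTensor T (TensorProduct.assoc k T T (T ⊗[k] T)).toLinearMap
          (lTensor T (TensorProduct.map γ γ)
            (lTensor T (Coalgebra.comul (R := k) (A := H)) (ρ x))) := by
        rw [lTensor_comp, lTensor_comp]; rfl
    _ = lTensor T (TensorProduct.assoc k T T (T ⊗[k] T)).toLinearMap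
          (lTensor T (TensorProduct.map γ γ)
            ((TensorProduct.assoc k T H H)
              ((TensorProduct.map ρl LinearMap.id) (ρ x)))) := by
        rw [hcoassoc x, LinearEquiv.apply_symm_apply]
        rfl
    _ = lTensor T (TensorProduct.assoc k T T (T ⊗[k] T)).toLinearMap
          ((TensorProduct.assoc k T (T ⊗[k] T) (T ⊗[k] T))
            (TensorProduct.map (lTensor T γ) γ
              ((TensorProduct.map ρl LinearMap.id) (ρ x)))) := by
        rw [M1]
    _ = lTensor T (TensorProduct.assoc k T T (T ⊗[k] T)).toLinearMap
          ((TensorProduct.assoc k T (T ⊗[k] T) (T ⊗[k] T))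
            ((rTensor (T ⊗[k] T) μ) (μ x))) := by
        rw [← comp_apply, ← S3, hμx, ← comp_apply (rTensor _ μ), S4]
end

section
/- Let T be a faithfully flat H-Galois object over k. Then the map θ is a unital algebra endomorphism of T: θ(1) = 1 and θ(x·y) = θ(x)·θ(y) for all x, y ∈ T. -/
open TensorProduct LinearMap HopfAlgebra Coalgebra
set_option maxHeartbeats 1000000
set_option synthInstance.maxHeartbeats 1000000

section Conv
variable {k : Type*} [CommRing k]
variable {C : Type*} [AddCommGroup C] [Module k C] [Coalgebra k C]
variable {A : Type*} [Ring A] [Algebra k A]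

/-- Convolution product on `Hom(C, A)`. -/
noncomputable def myconv (f g : C →ₗ[k] A) : C →ₗ[k] A :=
  mul' k A ∘ₗ TensorProduct.map f g ∘ₗ Coalgebra.comul

/-- Unit for the convolution product. -/
noncomputable def myconvOne : C →ₗ[k] A := Algebra.linearMap k A ∘ₗ Coalgebra.counit

lemma myconv_apply (f g : C →ₗ[k] A) (c : C) :
    myconv f g c = mul' k A (TensorProduct.map f g (Coalgebra.comul c)) := rfl

lemma myconvOne_apply (c : C) :
    (myconvOne (k := k) (C := C) (A := A)) c = algebraMap k A (Coalgebra.counit c) := rfl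

lemma myconv_assoc (f g h : C →ₗ[k] A) : myconv (myconv f g) h = myconv f (myconv g h) := by
  ext c
  have L1 : ∀ w : C ⊗[k] C,
      mul' k A (TensorProduct.map (myconv f g) h w)
        = (mul' k A ∘ₗ rTensor A (mul' k A) ∘ₗ TensorProduct.map (TensorProduct.map f g) h)
            (rTensor C (Coalgebra.comul (R := k)) w) := by
    intro w
    induction w using TensorProduct.induction_on with
    | zero => simp
    | tmul c₁ c₂ => simp [myconv_apply]
    | add u v hu hv => simp only [map_add, hu, hv]
  have L2 : ∀ w : C ⊗[k] C,
      mul' k A (TensorProduct.map f (myconv g h) w)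
        = (mul' k A ∘ₗ lTensor A (mul' k A) ∘ₗ TensorProduct.map f (TensorProduct.map g h))
            (lTensor C (Coalgebra.comul (R := k)) w) := by
    intro w
    induction w using TensorProduct.induction_on with
    | zero => simp
    | tmul c₁ c₂ => simp [myconv_apply]
    | add u v hu hv => simp only [map_add, hu, hv]
  have L3 : (mul' k A ∘ₗ lTensor A (mul' k A) ∘ₗ TensorProduct.map f (TensorProduct.map g h))
        ∘ₗ (TensorProduct.assoc k C C C).toLinearMap
      = mul' k A ∘ₗ rTensor A (mul' k A) ∘ₗ TensorProduct.map (TensorProduct.map f g) h :=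
    TensorProduct.ext_threefold fun x y z => by simp [mul_assoc]
  calc myconv (myconv f g) h c
      = mul' k A (TensorProduct.map (myconv f g) h (Coalgebra.comul c)) := rfl
    _ = (mul' k A ∘ₗ rTensor A (mul' k A) ∘ₗ TensorProduct.map (TensorProduct.map f g) h)
          (rTensor C (Coalgebra.comul (R := k)) (Coalgebra.comul c)) := L1 _
    _ = ((mul' k A ∘ₗ lTensor A (mul' k A) ∘ₗ TensorProduct.map f (TensorProduct.map g h))
        ∘ₗ (TensorProduct.assoc k C C C).toLinearMap)
          (rTensor C (Coalgebra.comul (R := k)) (Coalgebra.comul c)) := by rw [L3]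
    _ = (mul' k A ∘ₗ lTensor A (mul' k A) ∘ₗ TensorProduct.map f (TensorProduct.map g h))
          (lTensor C (Coalgebra.comul (R := k)) (Coalgebra.comul c)) := by
        simp only [LinearMap.comp_apply, LinearEquiv.coe_coe, Coalgebra.coassoc_apply]
    _ = myconv f (myconv g h) c := (L2 _).symm

lemma myconv_one_right (f : C →ₗ[k] A) : myconv f myconvOne = f := by
  ext c
  have L : ∀ w : C ⊗[k] C,
      mul' k A (TensorProduct.map f (myconvOne (k := k) (A := A)) w)
        = (mul' k A ∘ₗ TensorProduct.map f (Algebra.linearMap k A))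
            (lTensor C (Coalgebra.counit (R := k)) w) := by
    intro w
    induction w using TensorProduct.induction_on with
    | zero => simp
    | tmul c₁ c₂ => simp [myconvOne_apply]
    | add u v hu hv => simp only [map_add, hu, hv]
  calc myconv f myconvOne c
      = mul' k A (TensorProduct.map f (myconvOne (k := k) (A := A)) (Coalgebra.comul c)) := rfl
    _ = (mul' k A ∘ₗ TensorProduct.map f (Algebra.linearMap k A))
          (lTensor C (Coalgebra.counit (R := k)) (Coalgebra.comul c)) := L _
    _ = f c := by rw [Coalgebra.lTensor_counit_comul]; simp

lemma myconv_one_left (f : C →ₗ[k] A) : myconv myconvOne f = f := by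
  ext c
  have L : ∀ w : C ⊗[k] C,
      mul' k A (TensorProduct.map (myconvOne (k := k) (A := A)) f w)
        = (mul' k A ∘ₗ TensorProduct.map (Algebra.linearMap k A) f)
            (rTensor C (Coalgebra.counit (R := k)) w) := by
    intro w
    induction w using TensorProduct.induction_on with
    | zero => simp
    | tmul c₁ c₂ => simp [myconvOne_apply]
    | add u v hu hv => simp only [map_add, hu, hv]
  calc myconv myconvOne f c
      = mul' k A (TensorProduct.map (myconvOne (k := k) (A := A)) f (Coalgebra.comul c)) := rfl
    _ = (mul' k A ∘ₗ TensorProduct.map (Algebra.linearMap k A) f)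
          (rTensor C (Coalgebra.counit (R := k)) (Coalgebra.comul c)) := L _
    _ = f c := by rw [Coalgebra.rTensor_counit_comul]; simp

end Conv

section HopfFacts
variable {k : Type*} [CommRing k] {H : Type*} [Ring H] [HopfAlgebra k H]

lemma antipode_one' : HopfAlgebra.antipode (R := k) (A := H) 1 = 1 := by
  have h := HopfAlgebra.mul_antipode_rTensor_comul_apply (R := k) (A := H) 1
  rw [Bialgebra.comul_one, Algebra.TensorProduct.one_def] at h
  simpa using h

end HopfFacts

section Star
variable {k : Type*} [CommRing k] {H : Type*} [Ring H] [HopfAlgebra k H]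

local notation "SS" => HopfAlgebra.antipode (R := k) (A := H)

/-- `h ↦ h ⊗ 1` -/
noncomputable def AmapH (k H : Type*) [CommRing k] [Ring H] [HopfAlgebra k H] :
    H →ₗ[k] H ⊗[k] H := (TensorProduct.mk k H H).flip 1
/-- `h ↦ 1 ⊗ S h` -/
noncomputable def BmapH (k H : Type*) [CommRing k] [Ring H] [HopfAlgebra k H] :
    H →ₗ[k] H ⊗[k] H := TensorProduct.mk k H H 1 ∘ₗ HopfAlgebra.antipode k
/-- `h ↦ h₂ ⊗ h₁` -/
noncomputable def DmapH (k H : Type*) [CommRing k] [Ring H] [HopfAlgebra k H] :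
    H →ₗ[k] H ⊗[k] H := (TensorProduct.comm k H H).toLinearMap ∘ₗ Coalgebra.comul
/-- `h ↦ (S h)₂ ⊗ (S h)₁` -/
noncomputable def FmapH (k H : Type*) [CommRing k] [Ring H] [HopfAlgebra k H] :
    H →ₗ[k] H ⊗[k] H := DmapH k H ∘ₗ HopfAlgebra.antipode k

@[simp] lemma AmapH_apply (h : H) : AmapH k H h = h ⊗ₜ[k] 1 := rfl
@[simp] lemma BmapH_apply (h : H) : BmapH k H h = 1 ⊗ₜ[k] (SS h) := rfl
lemma DmapH_apply (h : H) :
    DmapH k H h = TensorProduct.comm k H H (Coalgebra.comul h) := rfl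
lemma FmapH_apply (h : H) : FmapH k H h = DmapH k H (SS h) := rfl

lemma comm_mul (u v : H ⊗[k] H) :
    TensorProduct.comm k H H (u * v)
      = TensorProduct.comm k H H u * TensorProduct.comm k H H v := by
  induction u using TensorProduct.induction_on with
  | zero => simp
  | tmul a b =>
    induction v using TensorProduct.induction_on with
    | zero => simp
    | tmul c d => simp [Algebra.TensorProduct.tmul_mul_tmul]
    | add u v hu hv => simp only [mul_add, map_add, hu, hv]
  | add u v hu hv => simp only [add_mul, map_add, hu, hv]

lemma comm_algebraMap (r : k) :
    TensorProduct.comm k H H (algebraMap k (H ⊗[k] H) r) = algebraMap k (H ⊗[k] H) r := by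
  rw [Algebra.TensorProduct.algebraMap_apply]
  simp only [TensorProduct.comm_tmul]
  rw [Algebra.algebraMap_eq_smul_one, TensorProduct.smul_tmul]

lemma star_one_aux : myconv (DmapH k H) (FmapH k H) = myconvOne := by
  ext c
  have L : ∀ w : H ⊗[k] H,
      mul' k (H ⊗[k] H) (TensorProduct.map (DmapH k H) (FmapH k H) w)
        = DmapH k H (mul' k H (lTensor H SS w)) := by
    intro w
    induction w using TensorProduct.induction_on with
    | zero => simp
    | tmul a b =>
      simp only [TensorProduct.map_tmul, lTensor_tmul, mul'_apply, FmapH_apply]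
      rw [DmapH_apply, DmapH_apply, DmapH_apply, ← comm_mul, ← Bialgebra.comul_mul]
    | add u v hu hv => simp only [map_add, hu, hv]
  calc myconv (DmapH k H) (FmapH k H) c
      = mul' k (H ⊗[k] H) (TensorProduct.map (DmapH k H) (FmapH k H) (Coalgebra.comul c)) := rfl
    _ = DmapH k H (mul' k H (lTensor H SS (Coalgebra.comul c))) := L _
    _ = myconvOne c := by
        rw [HopfAlgebra.mul_antipode_lTensor_comul_apply, myconvOne_apply, DmapH_apply,
          Bialgebra.comul_algebraMap, comm_algebraMap]

lemma star_two_aux : myconv (BmapH k H) (DmapH k H) = AmapH k H := by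
  ext c
  have L : ∀ w : H ⊗[k] H,
      mul' k (H ⊗[k] H) (TensorProduct.map (BmapH k H) (DmapH k H) w)
        = TensorProduct.comm k H H
            (mul' k (H ⊗[k] H) (TensorProduct.map (AmapH k H ∘ₗ SS) Coalgebra.comul w)) := by
    intro w
    induction w using TensorProduct.induction_on with
    | zero => simp
    | tmul a b =>
      simp only [TensorProduct.map_tmul, mul'_apply, LinearMap.comp_apply, AmapH_apply,
        BmapH_apply, DmapH_apply]
      rw [comm_mul]
      simp
    | add u v hu hv => simp only [map_add, hu, hv]
  have K2 : (mul' k (H ⊗[k] H)) ∘ₗ (TensorProduct.map (AmapH k H ∘ₗ SS) LinearMap.id)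
        ∘ₗ (TensorProduct.assoc k H H H).toLinearMap
      = rTensor H (mul' k H ∘ₗ rTensor H SS) :=
    TensorProduct.ext_threefold fun p q r => by
      simp [Algebra.TensorProduct.tmul_mul_tmul]
  have K3 : mul' k (H ⊗[k] H)
        (TensorProduct.map (AmapH k H ∘ₗ SS) Coalgebra.comul (Coalgebra.comul c))
      = (1 : H) ⊗ₜ[k] c := by
    have e1 : TensorProduct.map (AmapH k H ∘ₗ SS) (Coalgebra.comul (R := k)) (Coalgebra.comul c)
        = TensorProduct.map (AmapH k H ∘ₗ SS) LinearMap.id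
            (lTensor H (Coalgebra.comul (R := k)) (Coalgebra.comul c)) := by
      have : ∀ w : H ⊗[k] H,
          TensorProduct.map (AmapH k H ∘ₗ SS) (Coalgebra.comul (R := k)) w
            = TensorProduct.map (AmapH k H ∘ₗ SS) LinearMap.id
                (lTensor H (Coalgebra.comul (R := k)) w) := by
        intro w
        induction w using TensorProduct.induction_on with
        | zero => simp
        | tmul a b => simp
        | add u v hu hv => simp only [map_add, hu, hv]
      exact this _
    rw [e1, ← Coalgebra.coassoc_apply]
    have := congrFun (congrArg DFunLike.coe K2)
      (rTensor H (Coalgebra.comul (R := k)) (Coalgebra.comul c))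
    simp only [LinearMap.comp_apply, LinearEquiv.coe_coe] at this
    rw [this, ← LinearMap.comp_apply, ← rTensor_comp]
    have e2 : ((mul' k H ∘ₗ rTensor H SS) ∘ₗ Coalgebra.comul (R := k))
        = Algebra.linearMap k H ∘ₗ Coalgebra.counit := by
      rw [← HopfAlgebra.mul_antipode_rTensor_comul]; rfl
    rw [e2, rTensor_comp, LinearMap.comp_apply, Coalgebra.rTensor_counit_comul]
    simp
  calc myconv (BmapH k H) (DmapH k H) c
      = mul' k (H ⊗[k] H) (TensorProduct.map (BmapH k H) (DmapH k H) (Coalgebra.comul c)) := rfl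
    _ = TensorProduct.comm k H H
          (mul' k (H ⊗[k] H)
            (TensorProduct.map (AmapH k H ∘ₗ SS) Coalgebra.comul (Coalgebra.comul c))) := L _
    _ = AmapH k H c := by rw [K3]; simp

/-- The key fact `∑ h₁ (S h₂)₂ ⊗ (S h₂)₁ = 1 ⊗ S h`. -/
lemma star_aux : myconv (AmapH k H) (FmapH k H) = BmapH k H := by
  rw [← star_two_aux, myconv_assoc, star_one_aux, myconv_one_right]

end Star

section Step2Aux
variable {k : Type*} [CommRing k] {H T : Type*} [Ring H] [Ring T] [Algebra k H] [Algebra k T]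

lemma step2_aux (γ : H →ₗ[k] T ⊗[k] T)
    (Xi : (T ⊗[k] (T ⊗[k] H)) ⊗[k] (T ⊗[k] H) →ₗ[k] T ⊗[k] H)
    (Xi_tmul : ∀ (a : T) (w v : T ⊗[k] H), Xi ((a ⊗ₜ w) ⊗ₜ v) = (a ⊗ₜ (1:H)) * (v * w))
    (Mp : H ⊗[k] (H ⊗[k] H) →ₗ[k] H ⊗[k] H)
    (Mp_tmul : ∀ g₁ s₁ s₂ : H, Mp (g₁ ⊗ₜ (s₁ ⊗ₜ s₂)) = (g₁ * s₂) ⊗ₜ s₁) :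
    ∀ (t : T) (z : H ⊗[k] (H ⊗[k] H)),
          Xi (TensorProduct.map ((TensorProduct.assoc k T T H).toLinearMap ∘ₗ rTensor H γ)
                (TensorProduct.mk k T H t) (TensorProduct.comm k H (H ⊗[k] H) z))
            = TensorProduct.comm k H T
                (lTensor H (mul' k T ∘ₗ lTensor T (LinearMap.mulLeft k t) ∘ₗ γ) (Mp z)) := by
  intro t z
  induction z using TensorProduct.induction_on with
  | zero => simp
  | tmul g₁ y =>
    induction y using TensorProduct.induction_on with
    | zero => simp
    | tmul s₁ s₂ =>
      rw [Mp_tmul]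
      simp only [TensorProduct.comm_tmul, TensorProduct.map_tmul, LinearMap.comp_apply,
        TensorProduct.mk_apply, rTensor_tmul, lTensor_tmul]
      generalize γ s₁ = w
      induction w using TensorProduct.induction_on with
      | zero => simp
      | tmul a b =>
        simp only [TensorProduct.assoc_tmul, LinearEquiv.coe_coe]
        rw [Xi_tmul]
        simp only [Algebra.TensorProduct.tmul_mul_tmul, one_mul, mul_one,
          TensorProduct.comm_tmul, LinearMap.mulLeft_apply, lTensor_tmul, mul'_apply]
      | add w₁ w₂ h1 h2 =>
        simp only [map_add, TensorProduct.add_tmul, TensorProduct.tmul_add, h1, h2]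
    | add y₁ y₂ h1 h2 =>
      simp only [map_add, TensorProduct.tmul_add, h1, h2]
  | add z₁ z₂ h1 h2 => simp only [map_add, h1, h2]

end Step2Aux

section MultAux
variable {k : Type*} [CommRing k] {H T : Type*} [Ring H] [Ring T] [Algebra k H] [Algebra k T]

lemma genmc_aux (Dm Mm : (T ⊗[k] T) ⊗[k] (T ⊗[k] T) →ₗ[k] T ⊗[k] T)
    (Dm_tmul : ∀ c d a b : T, Dm ((c ⊗ₜ d) ⊗ₜ (a ⊗ₜ b)) = (c*a) ⊗ₜ (b*d))
    (Mm_tmul : ∀ c d a b : T, Mm ((c ⊗ₜ d) ⊗ₜ (a ⊗ₜ b)) = (c*b) ⊗ₜ (a*d))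
    (t s : T) (w w' : T ⊗[k] T) :
    rTensor T (mul' k T) ((TensorProduct.assoc k T T T).symm
        ((t*s) ⊗ₜ (TensorProduct.comm k T T (Dm (w ⊗ₜ w')))))
      = rTensor T (mul' k T) ((TensorProduct.assoc k T T T).symm (t ⊗ₜ
          Mm ((rTensor T (mul' k T) ((TensorProduct.assoc k T T T).symm
              (s ⊗ₜ TensorProduct.comm k T T w'))) ⊗ₜ w))) := by
  induction w using TensorProduct.induction_on with
  | zero => simp
  | tmul a b =>
    induction w' using TensorProduct.induction_on with
    | zero => simp
    | tmul c' d' =>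
      rw [Dm_tmul]
      simp only [TensorProduct.comm_tmul, TensorProduct.assoc_symm_tmul, rTensor_tmul,
        mul'_apply]
      rw [Mm_tmul]
      simp only [TensorProduct.assoc_symm_tmul, rTensor_tmul, mul'_apply, mul_assoc]
    | add u v hu hv =>
      simp only [map_add, TensorProduct.tmul_add, TensorProduct.add_tmul, hu, hv]
  | add u v hu hv =>
    simp only [map_add, TensorProduct.tmul_add, TensorProduct.add_tmul, hu, hv]

/-- The pairing map used in the multiplicativity proof. -/
noncomputable def PMdef (γS : H →ₗ[k] T ⊗[k] T)
    (Mm : (T ⊗[k] T) ⊗[k] (T ⊗[k] T) →ₗ[k] T ⊗[k] T) :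
    (T ⊗[k] H) ⊗[k] (T ⊗[k] T) →ₗ[k] T ⊗[k] T :=
  rTensor T (mul' k T) ∘ₗ (TensorProduct.assoc k T T T).symm.toLinearMap
    ∘ₗ lTensor T Mm
    ∘ₗ (TensorProduct.leftComm k (T ⊗[k] T) T (T ⊗[k] T)).toLinearMap
    ∘ₗ lTensor (T ⊗[k] T) (lTensor T γS)
    ∘ₗ (TensorProduct.comm k (T ⊗[k] H) (T ⊗[k] T)).toLinearMap

lemma PMdef_tmul (γS : H →ₗ[k] T ⊗[k] T)
    (Mm : (T ⊗[k] T) ⊗[k] (T ⊗[k] T) →ₗ[k] T ⊗[k] T) (t : T) (g : H) (ψ : T ⊗[k] T) :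
    PMdef γS Mm ((t ⊗ₜ g) ⊗ₜ ψ)
      = rTensor T (mul' k T)
          ((TensorProduct.assoc k T T T).symm (t ⊗ₜ Mm (ψ ⊗ₜ γS g))) := by
  simp [PMdef]

lemma mc_aux (γS : H →ₗ[k] T ⊗[k] T)
    (Dm Mm : (T ⊗[k] T) ⊗[k] (T ⊗[k] T) →ₗ[k] T ⊗[k] T)
    (Dm_tmul : ∀ c d a b : T, Dm ((c ⊗ₜ d) ⊗ₜ (a ⊗ₜ b)) = (c*a) ⊗ₜ (b*d))
    (Mm_tmul : ∀ c d a b : T, Mm ((c ⊗ₜ d) ⊗ₜ (a ⊗ₜ b)) = (c*b) ⊗ₜ (a*d))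
    (hwrap : ∀ g f : H, (1:T) ⊗ₜ[k] γS (g*f) = (1:T) ⊗ₜ[k] Dm (γS g ⊗ₜ γS f))
    (Psi : T ⊗[k] H →ₗ[k] T ⊗[k] T)
    (Psi_tmul : ∀ (t : T) (h : H), Psi (t ⊗ₜ h) = rTensor T (mul' k T)
        ((TensorProduct.assoc k T T T).symm (t ⊗ₜ TensorProduct.comm k T T (γS h)))) :
    ∀ u v : T ⊗[k] H,
      (1:T) ⊗ₜ[k] Psi (u * v) = (1:T) ⊗ₜ[k] PMdef γS Mm (u ⊗ₜ Psi v) := by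
  intro u v
  induction u using TensorProduct.induction_on with
  | zero => simp
  | tmul t g =>
    induction v using TensorProduct.induction_on with
    | zero => simp
    | tmul s f =>
      rw [Algebra.TensorProduct.tmul_mul_tmul, Psi_tmul, PMdef_tmul, Psi_tmul]
      have lwrap : ∀ w0 : T ⊗[k] T,
          (1:T) ⊗ₜ[k] (rTensor T (mul' k T) ((TensorProduct.assoc k T T T).symm
            ((t*s) ⊗ₜ TensorProduct.comm k T T w0)))
          = lTensor T (rTensor T (mul' k T) ∘ₗ (TensorProduct.assoc k T T T).symm.toLinearMap
              ∘ₗ TensorProduct.mk k T (T ⊗[k] T) (t*s)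
              ∘ₗ (TensorProduct.comm k T T).toLinearMap) ((1:T) ⊗ₜ w0) := by
        intro w0; simp
      rw [lwrap, hwrap, ← lwrap]
      rw [genmc_aux Dm Mm Dm_tmul Mm_tmul t s (γS g) (γS f)]
    | add v₁ v₂ h1 h2 =>
      simp only [mul_add, map_add, TensorProduct.tmul_add, h1, h2]
  | add u₁ u₂ h1 h2 =>
    simp only [add_mul, map_add, TensorProduct.add_tmul, TensorProduct.tmul_add, h1, h2]

lemma pmone_aux (γS : H →ₗ[k] T ⊗[k] T)
    (Mm : (T ⊗[k] T) ⊗[k] (T ⊗[k] T) →ₗ[k] T ⊗[k] T)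
    (Mm_tmul : ∀ c d a b : T, Mm ((c ⊗ₜ d) ⊗ₜ (a ⊗ₜ b)) = (c*b) ⊗ₜ (a*d))
    (Psi : T ⊗[k] H →ₗ[k] T ⊗[k] T)
    (Psi_tmul : ∀ (t : T) (h : H), Psi (t ⊗ₜ h) = rTensor T (mul' k T)
        ((TensorProduct.assoc k T T T).symm (t ⊗ₜ TensorProduct.comm k T T (γS h)))) :
    ∀ (u : T ⊗[k] H) (s0 : T),
      PMdef γS Mm (u ⊗ₜ ((1:T) ⊗ₜ s0)) = Psi u * ((1:T) ⊗ₜ s0) := by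
  intro u s0
  induction u using TensorProduct.induction_on with
  | zero => simp
  | tmul t g =>
    rw [PMdef_tmul, Psi_tmul]
    generalize γS g = w
    induction w using TensorProduct.induction_on with
    | zero => simp
    | tmul a b =>
      rw [Mm_tmul]
      simp only [TensorProduct.comm_tmul, TensorProduct.assoc_symm_tmul, rTensor_tmul,
        mul'_apply, one_mul, Algebra.TensorProduct.tmul_mul_tmul, mul_one]
    | add w₁ w₂ h1 h2 =>
      simp only [map_add, TensorProduct.tmul_add, TensorProduct.add_tmul, h1, h2, add_mul]
  | add u₁ u₂ h1 h2 =>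
    simp only [map_add, TensorProduct.add_tmul, add_mul, h1, h2]

end MultAux

/-- For a faithfully flat `H`-Galois object `T`, the map
`θ(x) = (x₍₀₎·S(x₍₁₎)⁽²⁾)·S(x₍₁₎)⁽¹⁾` is a unital algebra endomorphism of `T`. -/
theorem stmt_6
    {k : Type*} [CommRing k] {H : Type*} [Ring H] [HopfAlgebra k H]
    {T : Type*} [Ring T] [Algebra k T]
    -- `ρ` is an algebra map making `T` a right `H`-comodule algebra:
    (ρ : T →ₐ[k] T ⊗[k] H)
    (hcoassoc : ∀ x : T,
      (TensorProduct.map ρ.toLinearMap LinearMap.id) (ρ x)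
        = (TensorProduct.assoc k T H H).symm
            ((TensorProduct.map LinearMap.id Coalgebra.comul) (ρ x)))
    (hcounit : ∀ x : T,
      (TensorProduct.rid k T)
        ((TensorProduct.map LinearMap.id Coalgebra.counit) (ρ x)) = x)
    -- the coinvariants are exactly `k·1`:
    (hcoinv : {t : T | ρ t = t ⊗ₜ[k] (1 : H)} = Set.range (algebraMap k T))
    -- `T` is faithfully flat over `k`:
    (hflat : Module.FaithfullyFlat k T)
    -- the canonical (Galois) map `β(x ⊗ y) = x·y₍₀₎ ⊗ y₍₁₎`, assumed bijective:
    (β : T ⊗[k] T →ₗ[k] T ⊗[k] H)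
    (hβ : ∀ x y : T, β (x ⊗ₜ[k] y) = (x ⊗ₜ[k] (1 : H)) * ρ y)
    (hβbij : Function.Bijective β)
    -- `γ(h) = β⁻¹(1 ⊗ h) = h⁽¹⁾ ⊗ h⁽²⁾`:
    (γ : H →ₗ[k] T ⊗[k] T)
    (hγ : ∀ h : H, β (γ h) = (1 : T) ⊗ₜ[k] h)
    -- `θ(x) = (x₍₀₎·S(x₍₁₎)⁽²⁾)·S(x₍₁₎)⁽¹⁾`:
    (θ : T →ₗ[k] T)
    (hθ : θ = LinearMap.mul' k T
        ∘ₗ (TensorProduct.comm k T T).toLinearMap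
        ∘ₗ LinearMap.lTensor T (LinearMap.mul' k T)
        ∘ₗ (TensorProduct.assoc k T T T).toLinearMap
        ∘ₗ LinearMap.rTensor T (TensorProduct.comm k T T).toLinearMap
        ∘ₗ (TensorProduct.assoc k T T T).symm.toLinearMap
        ∘ₗ LinearMap.lTensor T (γ ∘ₗ HopfAlgebra.antipode (R := k))
        ∘ₗ ρ.toLinearMap)
    :
    θ 1 = 1 ∧ ∀ x y : T, θ (x * y) = θ x * θ y := by
  -- Abbreviations
  set S' : H →ₗ[k] H := HopfAlgebra.antipode (R := k) (A := H) with hS'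
  set ρL : T →ₗ[k] T ⊗[k] H := ρ.toLinearMap with hρL
  set γ' : H →ₗ[k] T ⊗[k] T := γ ∘ₗ S' with hγ'
  have hρL_apply : ∀ x : T, ρL x = ρ x := fun _ => rfl
  -- `Psi : T ⊗ H → T ⊗ T`,  `t ⊗ h ↦ t·(S h)⁽²⁾ ⊗ (S h)⁽¹⁾`
  set Psi : T ⊗[k] H →ₗ[k] T ⊗[k] T :=
    rTensor T (mul' k T) ∘ₗ (TensorProduct.assoc k T T T).symm.toLinearMap
      ∘ₗ lTensor T ((TensorProduct.comm k T T).toLinearMap ∘ₗ γ') with hPsi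
  have Psi_tmul : ∀ (t : T) (h : H), Psi (t ⊗ₜ h)
      = rTensor T (mul' k T) ((TensorProduct.assoc k T T T).symm
          (t ⊗ₜ (TensorProduct.comm k T T (γ' h)))) := by
    intro t h; simp [hPsi]
  -- θ x = μ (Psi (ρ x))
  have theta_eq : ∀ x : T, θ x = mul' k T (Psi (ρL x)) := by
    intro x
    rw [hθ]
    simp only [LinearMap.comp_apply]
    generalize ρ.toLinearMap x = u
    show mul' k T _ = mul' k T (Psi u)
    induction u using TensorProduct.induction_on with
    | zero => simp
    | tmul t h =>
      rw [Psi_tmul]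
      simp only [lTensor_tmul, LinearMap.comp_apply]
      generalize γ' h = w
      induction w using TensorProduct.induction_on with
      | zero => simp
      | tmul a b => simp
      | add w₁ w₂ h1 h2 =>
        simp only [tmul_add, map_add, h1, h2]
    | add u v hu hv => simp only [map_add, hu, hv]
  -- β basics
  have hβinj : Function.Injective β := hβbij.injective
  have hρ1 : ρL (1 : T) = 1 := map_one ρ
  have βl : ∀ (s : T) (u : T ⊗[k] T), β ((s ⊗ₜ (1:T)) * u) = (s ⊗ₜ (1:H)) * β u := by
    intro s u
    induction u using TensorProduct.induction_on with
    | zero => simp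
    | tmul x y =>
      rw [Algebra.TensorProduct.tmul_mul_tmul, one_mul, hβ, hβ, ← mul_assoc,
        Algebra.TensorProduct.tmul_mul_tmul, one_mul]
    | add u v hu hv => simp only [mul_add, map_add, hu, hv]
  have βr : ∀ (u : T ⊗[k] T) (y : T), β (u * ((1:T) ⊗ₜ y)) = β u * ρL y := by
    intro u y
    induction u using TensorProduct.induction_on with
    | zero => simp
    | tmul x z =>
      rw [Algebra.TensorProduct.tmul_mul_tmul, mul_one, hβ, hβ, hρL_apply, map_mul ρ, mul_assoc]
    | add u v hu hv => simp only [add_mul, map_add, hu, hv]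
  have γ1 : γ (1 : H) = (1:T) ⊗ₜ (1:T) := by
    apply hβinj
    rw [hγ, hβ, map_one]
    simp [Algebra.TensorProduct.one_def]
  have μβ : ∀ u : T ⊗[k] T,
      (TensorProduct.rid k T) (lTensor T (Coalgebra.counit (R:=k)) (β u)) = mul' k T u := by
    intro u
    induction u using TensorProduct.induction_on with
    | zero => simp
    | tmul x y =>
      rw [hβ]
      have sub : ∀ v : T ⊗[k] H,
          (TensorProduct.rid k T) (lTensor T (Coalgebra.counit (R:=k)) ((x ⊗ₜ (1:H)) * v))
            = x * (TensorProduct.rid k T) (lTensor T (Coalgebra.counit (R:=k)) v) := by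
        intro v
        induction v using TensorProduct.induction_on with
        | zero => simp
        | tmul t h => simp [Algebra.TensorProduct.tmul_mul_tmul, mul_smul_comm]
        | add u v hu hv => simp only [mul_add, map_add, hu, hv]
      rw [sub]
      have hy : (TensorProduct.rid k T) (lTensor T (Coalgebra.counit (R:=k)) (ρ y)) = y :=
        hcounit y
      rw [hy]
      simp
    | add u v hu hv => simp only [map_add, hu, hv]
  have μγ : ∀ h : H, mul' k T (γ h) = Coalgebra.counit (R:=k) h • (1:T) := by
    intro h
    rw [← μβ, hγ]
    simp
  -- coassociativity in rTensor/lTensor form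
  have hmapρ : ∀ y : T, rTensor H ρL (ρL y)
      = (TensorProduct.assoc k T H H).symm (lTensor T (Coalgebra.comul (R:=k)) (ρL y)) :=
    fun y => hcoassoc y
  -- the key "Θβ" exchange lemma
  have Θβ : ∀ u : T ⊗[k] T,
      rTensor H β ((TensorProduct.assoc k T T H).symm (lTensor T ρL u))
        = (TensorProduct.assoc k T H H).symm (lTensor T (Coalgebra.comul (R:=k)) (β u)) := by
    intro u
    induction u using TensorProduct.induction_on with
    | zero => simp
    | tmul x y =>
      have A' : ∀ v : T ⊗[k] H,
          rTensor H β ((TensorProduct.assoc k T T H).symm (x ⊗ₜ v))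
            = rTensor H (LinearMap.mulLeft k (x ⊗ₜ (1:H))) (rTensor H ρL v) := by
        intro v
        induction v using TensorProduct.induction_on with
        | zero => simp
        | tmul t g =>
          simp [hβ]
          rfl
        | add u v hu hv => simp only [map_add, tmul_add, hu, hv]
      have B : ∀ v : T ⊗[k] H,
          (TensorProduct.assoc k T H H).symm
              (lTensor T (Coalgebra.comul (R:=k)) ((x ⊗ₜ (1:H)) * v))
            = rTensor H (LinearMap.mulLeft k (x ⊗ₜ (1:H)))
                ((TensorProduct.assoc k T H H).symm (lTensor T (Coalgebra.comul (R:=k)) v)) := by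
        intro v
        induction v using TensorProduct.induction_on with
        | zero => simp
        | tmul t g =>
          rw [Algebra.TensorProduct.tmul_mul_tmul, one_mul]
          simp only [lTensor_tmul]
          generalize Coalgebra.comul (R:=k) g = d
          induction d using TensorProduct.induction_on with
          | zero => simp
          | tmul g₁ g₂ => simp [Algebra.TensorProduct.tmul_mul_tmul]
          | add d₁ d₂ h1 h2 => simp only [tmul_add, map_add, h1, h2]
        | add u v hu hv => simp only [mul_add, map_add, hu, hv]
      rw [lTensor_tmul, A' (ρL y), hmapρ y, ← B (ρL y), hβ, hρL_apply]
    | add u v hu hv => simp only [map_add, hu, hv]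
  -- injectivity of `rTensor H β`
  have rTβinj : Function.Injective (rTensor H β) := by
    have heq : rTensor H β
        = (TensorProduct.congr (LinearEquiv.ofBijective β hβbij)
            (LinearEquiv.refl k H)).toLinearMap := by
      apply TensorProduct.ext'
      intro u h
      simp [LinearEquiv.ofBijective]
    rw [heq]
    exact (TensorProduct.congr (LinearEquiv.ofBijective β hβbij)
      (LinearEquiv.refl k H)).injective
  -- identity (4)
  have id4 : ∀ h : H, lTensor T ρL (γ h)
      = TensorProduct.assoc k T T H (rTensor H γ (Coalgebra.comul (R:=k) h)) := by
    intro h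
    have inj : ∀ a b : T ⊗[k] (T ⊗[k] H),
        rTensor H β ((TensorProduct.assoc k T T H).symm a)
          = rTensor H β ((TensorProduct.assoc k T T H).symm b) → a = b := by
      intro a b hab
      exact (TensorProduct.assoc k T T H).symm.injective (rTβinj hab)
    apply inj
    rw [Θβ (γ h), hγ, LinearEquiv.symm_apply_apply]
    have sub : ∀ d : H ⊗[k] H, rTensor H β (rTensor H γ d)
        = (TensorProduct.assoc k T H H).symm ((1:T) ⊗ₜ d) := by
      intro d
      induction d using TensorProduct.induction_on with
      | zero => simp
      | tmul g₁ g₂ => simp [hγ]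
      | add d₁ d₂ h1 h2 => simp only [map_add, tmul_add, h1, h2]
    rw [sub]
    simp only [lTensor_tmul]
  -- auxiliary maps
  set e₁T : T →ₗ[k] T ⊗[k] H := (TensorProduct.mk k T H).flip 1 with he₁T
  have e₁T_apply : ∀ t : T, e₁T t = t ⊗ₜ (1:H) := fun t => rfl
  set ιm : H →ₗ[k] T ⊗[k] H := TensorProduct.mk k T H 1 with hιm
  have ιm_apply : ∀ h : H, ιm h = (1:T) ⊗ₜ h := fun h => rfl
  set β'm : T ⊗[k] T →ₗ[k] T ⊗[k] H :=
    mul' k (T ⊗[k] H) ∘ₗ TensorProduct.map ρL e₁T with hβ'm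
  have β'm_tmul : ∀ x y : T, β'm (x ⊗ₜ y) = ρL x * (y ⊗ₜ (1:H)) := by
    intro x y; simp [hβ'm]; rfl
  -- the κ identity : β'(γ h) = 1 ⊗ S h
  have κeq : ∀ h : H, β'm (γ h) = (1:T) ⊗ₜ S' h := by
    have claim1 : myconv ιm (ιm ∘ₗ S') = myconvOne := by
      ext c
      have L : ∀ w : H ⊗[k] H,
          mul' k (T ⊗[k] H) (TensorProduct.map ιm (ιm ∘ₗ S') w)
            = ιm (mul' k H (lTensor H S' w)) := by
        intro w
        induction w using TensorProduct.induction_on with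
        | zero => simp
        | tmul a b => simp [ιm_apply, Algebra.TensorProduct.tmul_mul_tmul]
        | add u v hu hv => simp only [map_add, hu, hv]
      calc myconv ιm (ιm ∘ₗ S') c
          = mul' k (T ⊗[k] H) (TensorProduct.map ιm (ιm ∘ₗ S') (Coalgebra.comul c)) := rfl
        _ = ιm (mul' k H (lTensor H S' (Coalgebra.comul c))) := L _
        _ = myconvOne c := by
            rw [hS', HopfAlgebra.mul_antipode_lTensor_comul_apply, myconvOne_apply, ιm_apply,
              Algebra.TensorProduct.algebraMap_apply, Algebra.algebraMap_eq_smul_one,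
              Algebra.algebraMap_eq_smul_one, TensorProduct.tmul_smul, TensorProduct.smul_tmul']
    have claim2 : myconv (β'm ∘ₗ γ) ιm = myconvOne := by
      ext h
      have inner : ∀ (b : H) (v : T ⊗[k] T),
          β'm v * ((1:T) ⊗ₜ b)
            = (mul' k (T ⊗[k] H) ∘ₗ TensorProduct.map ρL LinearMap.id)
                (TensorProduct.assoc k T T H (v ⊗ₜ b)) := by
        intro b v
        induction v using TensorProduct.induction_on with
        | zero => simp
        | tmul x y =>
          simp [β'm_tmul, Algebra.TensorProduct.tmul_mul_tmul, mul_assoc]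
        | add u v hu hv => simp only [add_mul, map_add, TensorProduct.add_tmul, hu, hv]
      have L : ∀ w : H ⊗[k] H,
          mul' k (T ⊗[k] H) (TensorProduct.map (β'm ∘ₗ γ) ιm w)
            = (mul' k (T ⊗[k] H) ∘ₗ TensorProduct.map ρL LinearMap.id)
                (TensorProduct.assoc k T T H (rTensor H γ w)) := by
        intro w
        induction w using TensorProduct.induction_on with
        | zero => simp
        | tmul a b =>
          simp only [TensorProduct.map_tmul, mul'_apply, LinearMap.comp_apply,
            rTensor_tmul, ιm_apply]
          exact inner b (γ a)
        | add u v hu hv => simp only [map_add, hu, hv]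
      have L2 : ∀ v : T ⊗[k] T,
          (mul' k (T ⊗[k] H) ∘ₗ TensorProduct.map ρL LinearMap.id) (lTensor T ρL v)
            = ρL (mul' k T v) := by
        intro v
        induction v using TensorProduct.induction_on with
        | zero => simp
        | tmul x y =>
          simp only [lTensor_tmul, LinearMap.comp_apply, TensorProduct.map_tmul,
            mul'_apply, LinearMap.id_coe, id_eq]
          rw [hρL_apply, hρL_apply, hρL_apply, ← map_mul ρ]
        | add u v hu hv => simp only [map_add, hu, hv]
      calc myconv (β'm ∘ₗ γ) ιm h
          = mul' k (T ⊗[k] H) (TensorProduct.map (β'm ∘ₗ γ) ιm (Coalgebra.comul h)) := rfl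
        _ = (mul' k (T ⊗[k] H) ∘ₗ TensorProduct.map ρL LinearMap.id)
              (TensorProduct.assoc k T T H (rTensor H γ (Coalgebra.comul h))) := L _
        _ = (mul' k (T ⊗[k] H) ∘ₗ TensorProduct.map ρL LinearMap.id)
              (lTensor T ρL (γ h)) := by rw [← id4]
        _ = ρL (mul' k T (γ h)) := L2 _
        _ = myconvOne h := by
            rw [μγ, map_smul, hρ1, myconvOne_apply, Algebra.algebraMap_eq_smul_one]
    have key : (β'm ∘ₗ γ) = ιm ∘ₗ S' := by
      calc β'm ∘ₗ γ = myconv (β'm ∘ₗ γ) myconvOne := (myconv_one_right _).symm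
        _ = myconv (β'm ∘ₗ γ) (myconv ιm (ιm ∘ₗ S')) := by rw [claim1]
        _ = myconv (myconv (β'm ∘ₗ γ) ιm) (ιm ∘ₗ S') := (myconv_assoc _ _ _).symm
        _ = myconv myconvOne (ιm ∘ₗ S') := by rw [claim2]
        _ = ιm ∘ₗ S' := myconv_one_left _
    intro h
    exact congrFun (congrArg DFunLike.coe key) h
  -- `Dm ((c⊗d) ⊗ (a⊗b)) = (c*a) ⊗ (b*d)`
  set Dm : (T ⊗[k] T) ⊗[k] (T ⊗[k] T) →ₗ[k] T ⊗[k] T :=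
    TensorProduct.map (mul' k T) (mul' k T)
      ∘ₗ lTensor (T ⊗[k] T) (TensorProduct.comm k T T).toLinearMap
      ∘ₗ (TensorProduct.tensorTensorTensorComm k T T T T).toLinearMap with hDm
  have Dm_tmul : ∀ c d a b : T, Dm ((c ⊗ₜ d) ⊗ₜ (a ⊗ₜ b)) = (c*a) ⊗ₜ (b*d) := by
    intro c d a b; simp [hDm]
  -- `Jm ((a⊗b) ⊗ v) = (a⊗1) * (v * ρ b)`
  set Jm : (T ⊗[k] T) ⊗[k] (T ⊗[k] H) →ₗ[k] T ⊗[k] H :=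
    mul' k (T ⊗[k] H)
      ∘ₗ lTensor (T ⊗[k] H) (mul' k (T ⊗[k] H))
      ∘ₗ lTensor (T ⊗[k] H) (TensorProduct.comm k (T ⊗[k] H) (T ⊗[k] H)).toLinearMap
      ∘ₗ (TensorProduct.assoc k (T ⊗[k] H) (T ⊗[k] H) (T ⊗[k] H)).toLinearMap
      ∘ₗ rTensor (T ⊗[k] H) (TensorProduct.map e₁T ρL) with hJm
  have Jm_tmul : ∀ (a b : T) (v : T ⊗[k] H),
      Jm ((a ⊗ₜ b) ⊗ₜ v) = (a ⊗ₜ (1:H)) * (v * ρL b) := by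
    intro a b v; simp [hJm]; rfl
  have βDm : ∀ w v : T ⊗[k] T, β (Dm (w ⊗ₜ v)) = Jm (w ⊗ₜ β v) := by
    intro w v
    induction w using TensorProduct.induction_on with
    | zero => simp
    | tmul c d =>
      rw [Jm_tmul]
      induction v using TensorProduct.induction_on with
      | zero => simp
      | tmul a b =>
        rw [Dm_tmul, hβ, hβ, map_mul ρ]
        have h1 : ((c*a) ⊗ₜ[k] (1:H)) = (c ⊗ₜ[k] (1:H)) * (a ⊗ₜ[k] (1:H)) := by
          rw [Algebra.TensorProduct.tmul_mul_tmul, mul_one]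
        rw [h1, mul_assoc, mul_assoc]
        rfl
      | add u v hu hv =>
        simp only [map_add, TensorProduct.tmul_add, mul_add, add_mul, hu, hv]
    | add u v hu hv => simp only [map_add, TensorProduct.add_tmul, add_mul, hu, hv]
  -- identity (2) : γ (g*h) = Dm (γ h ⊗ γ g)
  have id2 : ∀ g h : H, γ (g * h) = Dm (γ h ⊗ₜ γ g) := by
    intro g h
    apply hβinj
    rw [hγ, βDm, hγ]
    have sub : ∀ w : T ⊗[k] T, Jm (w ⊗ₜ ((1:T) ⊗ₜ g)) = ((1:T) ⊗ₜ g) * β w := by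
      intro w
      induction w using TensorProduct.induction_on with
      | zero => simp
      | tmul c d =>
        rw [Jm_tmul, hβ, ← mul_assoc, ← mul_assoc, Algebra.TensorProduct.tmul_mul_tmul,
          Algebra.TensorProduct.tmul_mul_tmul, one_mul, mul_one, mul_one, one_mul, hρL_apply]
      | add u v hu hv => simp only [map_add, TensorProduct.add_tmul, add_mul, mul_add, hu, hv]
    rw [sub, hγ, Algebra.TensorProduct.tmul_mul_tmul, one_mul]
  -- `Xi ((a ⊗ w) ⊗ v) = (a⊗1) * (v * w)`
  set Xi : (T ⊗[k] (T ⊗[k] H)) ⊗[k] (T ⊗[k] H) →ₗ[k] T ⊗[k] H :=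
    mul' k (T ⊗[k] H)
      ∘ₗ lTensor (T ⊗[k] H) (mul' k (T ⊗[k] H))
      ∘ₗ lTensor (T ⊗[k] H) (TensorProduct.comm k (T ⊗[k] H) (T ⊗[k] H)).toLinearMap
      ∘ₗ (TensorProduct.assoc k (T ⊗[k] H) (T ⊗[k] H) (T ⊗[k] H)).toLinearMap
      ∘ₗ rTensor (T ⊗[k] H) (TensorProduct.map e₁T LinearMap.id) with hXi
  have Xi_tmul : ∀ (a : T) (w v : T ⊗[k] H),
      Xi ((a ⊗ₜ w) ⊗ₜ v) = (a ⊗ₜ (1:H)) * (v * w) := by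
    intro a w v; simp [hXi]; rfl
  have JmXi : ∀ (w : T ⊗[k] T) (v : T ⊗[k] H), Jm (w ⊗ₜ v) = Xi (lTensor T ρL w ⊗ₜ v) := by
    intro w v
    induction w using TensorProduct.induction_on with
    | zero => simp
    | tmul a b => rw [Jm_tmul, lTensor_tmul, Xi_tmul]
    | add u v' hu hv => simp only [map_add, TensorProduct.add_tmul, hu, hv]
  -- the Miyashita–Ulbrich contraction `ϑ (t ⊗ h) = (S h)⁽¹⁾ · t · (S h)⁽²⁾`
  set ϑm : T ⊗[k] H →ₗ[k] T :=
    mul' k T ∘ₗ lTensor T (mul' k T) ∘ₗ (TensorProduct.leftComm k T T T).toLinearMap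
      ∘ₗ lTensor T γ' with hϑm
  have ϑeq : ∀ (t : T) (h : H),
      ϑm (t ⊗ₜ h) = mul' k T (lTensor T (LinearMap.mulLeft k t) (γ (S' h))) := by
    intro t h
    simp only [hϑm, LinearMap.comp_apply, lTensor_tmul]
    have : γ' h = γ (S' h) := rfl
    rw [← this]
    generalize γ' h = w
    induction w using TensorProduct.induction_on with
    | zero => simp
    | tmul a b => simp [mul_assoc]
    | add w₁ w₂ h1 h2 => simp only [map_add, TensorProduct.tmul_add, h1, h2]
  -- C2 :  β ∘ τ ∘ Psi  in terms of Jm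
  have C2 : ∀ u : T ⊗[k] H,
      β (TensorProduct.comm k T T (Psi u))
        = Jm (TensorProduct.comm k (T ⊗[k] H) (T ⊗[k] T) (TensorProduct.map ρL γ' u)) := by
    intro u
    induction u using TensorProduct.induction_on with
    | zero => simp
    | tmul t h =>
      rw [Psi_tmul]
      simp only [TensorProduct.map_tmul, TensorProduct.comm_tmul, LinearMap.comp_apply]
      generalize γ' h = w
      induction w using TensorProduct.induction_on with
      | zero => simp
      | tmul a b =>
        simp only [TensorProduct.comm_tmul, TensorProduct.assoc_symm_tmul, rTensor_tmul,
          mul'_apply]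
        rw [Jm_tmul, hβ, hρL_apply, map_mul ρ]
        rfl
      | add w₁ w₂ h1 h2 =>
        simp only [map_add, TensorProduct.tmul_add, TensorProduct.add_tmul, h1, h2]
    | add u v hu hv => simp only [map_add, hu, hv]
  have mapsplit : ∀ u : T ⊗[k] H,
      TensorProduct.map ρL γ' u = lTensor (T ⊗[k] H) γ' (rTensor H ρL u) := by
    intro u
    induction u using TensorProduct.induction_on with
    | zero => simp
    | tmul t h => simp
    | add u v hu hv => simp only [map_add, hu, hv]
  -- the H-side collapse map  `Mp (g₁ ⊗ (s₁ ⊗ s₂)) = (g₁ * s₂) ⊗ s₁`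
  set Mp : H ⊗[k] (H ⊗[k] H) →ₗ[k] H ⊗[k] H :=
    rTensor H (mul' k H) ∘ₗ (TensorProduct.assoc k H H H).symm.toLinearMap
      ∘ₗ lTensor H (TensorProduct.comm k H H).toLinearMap with hMp
  have Mp_tmul : ∀ g₁ s₁ s₂ : H, Mp (g₁ ⊗ₜ (s₁ ⊗ₜ s₂)) = (g₁ * s₂) ⊗ₜ s₁ := by
    intro g₁ s₁ s₂; simp [hMp]
  -- collapse via the STAR lemma
  have starcollapse : ∀ h : H,
      Mp (lTensor H (Coalgebra.comul ∘ₗ S') (Coalgebra.comul h)) = (1:H) ⊗ₜ S' h := by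
    intro h
    have sub : ∀ w : H ⊗[k] H,
        Mp (lTensor H (Coalgebra.comul ∘ₗ S') w)
          = mul' k (H ⊗[k] H) (TensorProduct.map (AmapH k H) (FmapH k H) w) := by
      intro w
      induction w using TensorProduct.induction_on with
      | zero => simp
      | tmul a b =>
        simp only [lTensor_tmul, LinearMap.comp_apply, TensorProduct.map_tmul, mul'_apply,
          AmapH_apply, FmapH_apply, DmapH_apply]
        generalize (Coalgebra.comul (S' b) : H ⊗[k] H) = d
        induction d using TensorProduct.induction_on with
        | zero => simp
        | tmul s₁ s₂ =>
          rw [Mp_tmul]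
          simp [Algebra.TensorProduct.tmul_mul_tmul]
        | add d₁ d₂ h1 h2 => simp only [map_add, TensorProduct.tmul_add, mul_add, h1, h2]
      | add u v hu hv => simp only [map_add, hu, hv]
    rw [sub]
    have e : mul' k (H ⊗[k] H) (TensorProduct.map (AmapH k H) (FmapH k H) (Coalgebra.comul h))
        = myconv (AmapH k H) (FmapH k H) h := rfl
    rw [e, star_aux]
    rfl
  -- the big computation C4
  have C4 : ∀ u : T ⊗[k] H,
      Jm (TensorProduct.comm k (T ⊗[k] H) (T ⊗[k] T)
          (lTensor (T ⊗[k] H) γ'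
            ((TensorProduct.assoc k T H H).symm (lTensor T (Coalgebra.comul (R:=k)) u))))
        = e₁T (ϑm u) := by
    intro u
    induction u using TensorProduct.induction_on with
    | zero => simp
    | tmul t h =>
      have step1 : ∀ d : H ⊗[k] H,
          Jm (TensorProduct.comm k (T ⊗[k] H) (T ⊗[k] T)
              (lTensor (T ⊗[k] H) γ' ((TensorProduct.assoc k T H H).symm (t ⊗ₜ d))))
            = Xi (TensorProduct.map
                  ((TensorProduct.assoc k T T H).toLinearMap ∘ₗ rTensor H γ)
                  (TensorProduct.mk k T H t)
                  (TensorProduct.comm k H (H ⊗[k] H)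
                    (lTensor H (Coalgebra.comul ∘ₗ S') d))) := by
        intro d
        induction d using TensorProduct.induction_on with
        | zero => simp
        | tmul g₁ g₂ =>
          simp only [TensorProduct.assoc_symm_tmul, lTensor_tmul, TensorProduct.comm_tmul,
            TensorProduct.map_tmul, LinearMap.comp_apply, TensorProduct.mk_apply]
          rw [JmXi]
          have e : lTensor T ρL (γ' g₂)
              = TensorProduct.assoc k T T H (rTensor H γ (Coalgebra.comul (S' g₂))) :=
            id4 (S' g₂)
          rw [e]
          rfl
        | add d₁ d₂ h1 h2 =>
          simp only [map_add, TensorProduct.tmul_add, h1, h2]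
      have step2 := step2_aux γ Xi Xi_tmul Mp Mp_tmul t
      rw [lTensor_tmul, step1 (Coalgebra.comul h), step2, starcollapse, ϑeq]
      simp only [lTensor_tmul, TensorProduct.comm_tmul, LinearMap.comp_apply, e₁T_apply]
    | add u v hu hv => simp only [map_add, hu, hv]
  -- CLAIM C
  have claimC : ∀ x : T, Psi (ρL x) = (1:T) ⊗ₜ θ x := by
    intro x
    have h0 : β (TensorProduct.comm k T T (Psi (ρL x))) = e₁T (ϑm (ρL x)) := by
      rw [C2, mapsplit, hmapρ x]
      exact C4 (ρL x)
    have h1 : β (TensorProduct.comm k T T (Psi (ρL x))) = β ((ϑm (ρL x)) ⊗ₜ (1:T)) := by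
      rw [h0, hβ, map_one, mul_one, e₁T_apply]
    have h2 := hβinj h1
    have h3 : Psi (ρL x) = (1:T) ⊗ₜ ϑm (ρL x) := by
      apply (TensorProduct.comm k T T).injective
      rw [h2, TensorProduct.comm_tmul]
    have hθx : θ x = ϑm (ρL x) := by
      rw [theta_eq, h3]
      simp
    rw [h3, hθx]
  -- θ 1 = 1
  have γ'1 : γ' (1:H) = (1:T) ⊗ₜ (1:T) := by
    have : S' (1:H) = 1 := antipode_one'
    show γ (S' 1) = _
    rw [this, γ1]
  have θ1 : θ (1:T) = 1 := by
    rw [theta_eq, hρ1, Algebra.TensorProduct.one_def, Psi_tmul, γ'1]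
    simp
  -- J'm ((c⊗d) ⊗ v) = ρ c * (v * (d⊗1))
  set J'm : (T ⊗[k] T) ⊗[k] (T ⊗[k] H) →ₗ[k] T ⊗[k] H :=
    mul' k (T ⊗[k] H)
      ∘ₗ lTensor (T ⊗[k] H) (mul' k (T ⊗[k] H))
      ∘ₗ lTensor (T ⊗[k] H) (TensorProduct.comm k (T ⊗[k] H) (T ⊗[k] H)).toLinearMap
      ∘ₗ (TensorProduct.assoc k (T ⊗[k] H) (T ⊗[k] H) (T ⊗[k] H)).toLinearMap
      ∘ₗ rTensor (T ⊗[k] H) (TensorProduct.map ρL e₁T) with hJ'm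
  have J'm_tmul : ∀ (c d : T) (v : T ⊗[k] H),
      J'm ((c ⊗ₜ d) ⊗ₜ v) = ρL c * (v * (d ⊗ₜ (1:H))) := by
    intro c d v; simp [hJ'm]; rfl
  have W1 : ∀ w v : T ⊗[k] T, β'm (Dm (w ⊗ₜ v)) = J'm (w ⊗ₜ β'm v) := by
    intro w v
    induction w using TensorProduct.induction_on with
    | zero => simp
    | tmul c d =>
      rw [J'm_tmul]
      induction v using TensorProduct.induction_on with
      | zero => simp
      | tmul a b =>
        rw [Dm_tmul, β'm_tmul, β'm_tmul]
        have e1 : ρL (c*a) = ρL c * ρL a := map_mul ρ c a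
        have e2 : ((b*d) ⊗ₜ[k] (1:H)) = (b ⊗ₜ[k] (1:H)) * (d ⊗ₜ[k] (1:H)) := by
          rw [Algebra.TensorProduct.tmul_mul_tmul, mul_one]
        rw [e1, e2, mul_assoc, mul_assoc]
      | add u v hu hv =>
        simp only [map_add, TensorProduct.tmul_add, mul_add, add_mul, hu, hv]
    | add u v hu hv => simp only [map_add, TensorProduct.add_tmul, add_mul, hu, hv]
  have W2 : ∀ (w : T ⊗[k] T) (s0 : H),
      J'm (w ⊗ₜ ((1:T) ⊗ₜ s0)) = β'm w * ((1:T) ⊗ₜ s0) := by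
    intro w s0
    induction w using TensorProduct.induction_on with
    | zero => simp
    | tmul c d =>
      rw [J'm_tmul, β'm_tmul, mul_assoc]
      congr 1
      rw [Algebra.TensorProduct.tmul_mul_tmul, Algebra.TensorProduct.tmul_mul_tmul,
        one_mul, mul_one, one_mul, mul_one]
    | add u v hu hv => simp only [map_add, TensorProduct.add_tmul, add_mul, hu, hv]
  have γSmul : ∀ g f : H, β'm (γ (g * f)) = (1:T) ⊗ₜ (S' f * S' g) := by
    intro g f
    rw [id2 g f, W1, κeq g, W2, κeq f, Algebra.TensorProduct.tmul_mul_tmul, one_mul]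
  have γSwrap : ∀ g f : H,
      (1:T) ⊗ₜ[k] γ' (g * f) = (1:T) ⊗ₜ[k] Dm (γ' g ⊗ₜ γ' f) := by
    intro g f
    calc (1:T) ⊗ₜ[k] γ' (g*f)
        = lTensor T γ ((1:T) ⊗ₜ S' (g*f)) := by rw [lTensor_tmul]; rfl
      _ = lTensor T γ (β'm (γ (g*f))) := by rw [κeq]
      _ = lTensor T γ ((1:T) ⊗ₜ (S' f * S' g)) := by rw [γSmul]
      _ = (1:T) ⊗ₜ γ (S' f * S' g) := by rw [lTensor_tmul]
      _ = (1:T) ⊗ₜ Dm (γ' g ⊗ₜ γ' f) := by rw [id2 (S' f) (S' g)]; rfl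
  -- the Mm pairing
  set Mm : (T ⊗[k] T) ⊗[k] (T ⊗[k] T) →ₗ[k] T ⊗[k] T :=
    TensorProduct.map (mul' k T) (mul' k T)
      ∘ₗ lTensor (T ⊗[k] T) (TensorProduct.comm k T T).toLinearMap
      ∘ₗ (TensorProduct.tensorTensorTensorComm k T T T T).toLinearMap
      ∘ₗ lTensor (T ⊗[k] T) (TensorProduct.comm k T T).toLinearMap with hMm
  have Mm_tmul : ∀ c d a b : T, Mm ((c ⊗ₜ d) ⊗ₜ (a ⊗ₜ b)) = (c*b) ⊗ₜ (a*d) := by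
    intro c d a b; simp [hMm]
  have MC := mc_aux γ' Dm Mm Dm_tmul Mm_tmul γSwrap Psi Psi_tmul
  have PMone := pmone_aux γ' Mm Mm_tmul Psi Psi_tmul
  have unwrap : ∀ w : T ⊗[k] T,
      rTensor T (mul' k T) ((TensorProduct.assoc k T T T).symm ((1:T) ⊗ₜ w)) = w := by
    intro w
    induction w using TensorProduct.induction_on with
    | zero => simp
    | tmul p q => simp
    | add u v hu hv => simp only [TensorProduct.tmul_add, map_add, hu, hv]
  refine ⟨θ1, ?_⟩
  intro x y
  have hρxy : ρL (x*y) = ρL x * ρL y := map_mul ρ x y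
  have e1 : (1:T) ⊗ₜ[k] Psi (ρL (x*y)) = (1:T) ⊗ₜ[k] ((1:T) ⊗ₜ (θ x * θ y)) := by
    rw [hρxy, MC (ρL x) (ρL y), claimC y, PMone (ρL x) (θ y), claimC x,
      Algebra.TensorProduct.tmul_mul_tmul, one_mul]
  rw [claimC (x*y)] at e1
  have e2 := congrArg
    (fun z => rTensor T (mul' k T) ((TensorProduct.assoc k T T T).symm z)) e1
  simp only [unwrap] at e2
  have e3 := congrArg (mul' k T) e2
  simpa using e3
end
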